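/- arXiv:2112.05369 — 10 statements merged into one kernel-verified Lean document; each statement's English description precedes it below -/
import Mathlib

section
/- For every real p with 1 ≤ p < ∞ there exists a constant C > 0 such that for every entire function f : ℂ → ℂ and every z ∈ ℂ, |f(z)|^p · exp(−p|z|²/2) ≤ C · ∫_{D(z,1)} |f(w)|^p · exp(−p|w|²/2) dA(w), where D(z,1) is the open disc in ℂ of radius 1 centered at z. -/
open MeasureTheory Metric Set Real

-- integrability of continuous functions on balls
lemma cont_intOn {h : ℂ → ℝ} (hh : Continuous h) (z : ℂ) (r : ℝ) :
    IntegrableOn h (Metric.ball z r) volume :=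
  (hh.continuousOn.integrableOn_compact (isCompact_closedBall z r)).mono_set
    Metric.ball_subset_closedBall

lemma cont_intOnC {h : ℂ → ℂ} (hh : Continuous h) (z : ℂ) (r : ℝ) :
    IntegrableOn h (Metric.ball z r) volume :=
  (hh.continuousOn.integrableOn_compact (isCompact_closedBall z r)).mono_set
    Metric.ball_subset_closedBall

-- circle mean value property
lemma circle_mvp (g : ℂ → ℂ) (hg : Differentiable ℂ g) (z : ℂ) {r : ℝ} (hr : 0 < r) :
    ∫ θ in (0:ℝ)..(2*π), g (circleMap z r θ) = (2*π : ℝ) • g z := by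
  have hz : z ∈ Metric.ball z r := by simp [hr]
  have h := (DiffContOnCl.mk (hg.differentiableOn) (hg.continuous.continuousOn)).circleIntegral_sub_inv_smul hz
  rw [circleIntegral] at h
  have hne : ∀ θ : ℝ, circleMap 0 r θ ≠ 0 := by
    intro θ
    simp only [circleMap, zero_add]
    exact mul_ne_zero (by exact_mod_cast hr.ne') (Complex.exp_ne_zero _)
  have h2 : ∀ θ : ℝ, deriv (circleMap z r) θ • (circleMap z r θ - z)⁻¹ • g (circleMap z r θ)
      = Complex.I * g (circleMap z r θ) := by
    intro θ
    rw [deriv_circleMap, circleMap_sub_center, smul_eq_mul, smul_eq_mul]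
    field_simp [hne θ]
  simp only [h2] at h
  rw [intervalIntegral.integral_const_mul] at h
  have hI : (Complex.I)⁻¹ * (2 * π * Complex.I) = (2*π : ℝ) := by
    rw [Complex.inv_I]
    push_cast
    linear_combination (-2*(π:ℂ)) * Complex.I_sq
  calc ∫ θ in (0:ℝ)..(2*π), g (circleMap z r θ)
      = (Complex.I)⁻¹ * (Complex.I * ∫ θ in (0:ℝ)..(2*π), g (circleMap z r θ)) := by
        rw [← mul_assoc, inv_mul_cancel₀ Complex.I_ne_zero, one_mul]
    _ = (Complex.I)⁻¹ * ((2 * ↑π * Complex.I) • g z) := by rw [h]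
    _ = (2*π : ℝ) • g z := by
        rw [smul_eq_mul, ← mul_assoc, hI]
        simp [Complex.real_smul]

-- circle mvp over Ioo (-π) π in polar form
lemma circle_mvp' (g : ℂ → ℂ) (hg : Differentiable ℂ g) (z : ℂ) {r : ℝ} (hr : 0 < r) :
    ∫ θ in Set.Ioo (-π) π, g (z + Complex.polarCoord.symm (r, θ)) = (2*π : ℝ) • g z := by
  have hcm : ∀ θ : ℝ, z + Complex.polarCoord.symm (r, θ) = circleMap z r θ := by
    intro θ
    simp only [Complex.polarCoord_symm_apply, circleMap, Complex.exp_mul_I,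
      Complex.ofReal_cos, Complex.ofReal_sin]
  simp only [hcm]
  have hper : Function.Periodic (fun θ => g (circleMap z r θ)) (2*π) :=
    (periodic_circleMap z r).comp g
  have := hper.intervalIntegral_add_eq (-π) 0
  rw [← circle_mvp g hg z hr]
  rw [← MeasureTheory.integral_Ioc_eq_integral_Ioo,
    ← intervalIntegral.integral_of_le (by linarith [Real.pi_pos] : -π ≤ π)]
  have hπ : -π + 2*π = π := by ring
  rw [hπ] at this
  rw [this, zero_add]

-- area mean value property
lemma ball_mvp (g : ℂ → ℂ) (hg : Differentiable ℂ g) (z : ℂ) :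
    ∫ w in Metric.ball z 1, g w = (π : ℂ) * g z := by
  have h0 : ∀ u : ℂ, Set.indicator (Metric.ball z 1) g (z + u)
      = Set.indicator (Metric.ball (0:ℂ) 1) (fun u => g (z + u)) u := by
    intro u
    have hmem : z + u ∈ Metric.ball z 1 ↔ u ∈ Metric.ball (0:ℂ) 1 := by
      simp [Metric.mem_ball, dist_eq_norm]
    by_cases hu : u ∈ Metric.ball (0:ℂ) 1
    · rw [Set.indicator_of_mem hu, Set.indicator_of_mem (hmem.2 hu)]
    · rw [Set.indicator_of_notMem hu, Set.indicator_of_notMem (fun h => hu (hmem.1 h))]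
  have hcs : Continuous fun p : ℝ × ℝ => (Complex.polarCoord.symm p : ℂ) := by
    have heq : (fun p : ℝ × ℝ => (Complex.polarCoord.symm p : ℂ))
        = fun p : ℝ × ℝ => (p.1 : ℂ) * (Real.cos p.2 + Real.sin p.2 * Complex.I) :=
      funext fun p => Complex.polarCoord_symm_apply p
    rw [heq]
    fun_prop
  have hcont : Continuous fun p : ℝ × ℝ => p.1 • g (z + Complex.polarCoord.symm p) :=
    continuous_fst.smul (hg.continuous.comp (continuous_const.add hcs))
  calc ∫ w in Metric.ball z 1, g w
      = ∫ u, Set.indicator (Metric.ball z 1) g u := by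
        rw [MeasureTheory.integral_indicator measurableSet_ball]
    _ = ∫ u, Set.indicator (Metric.ball z 1) g (z + u) := by
        rw [MeasureTheory.integral_add_left_eq_self]
    _ = ∫ u, Set.indicator (Metric.ball (0:ℂ) 1) (fun u => g (z + u)) u := by
        simp_rw [h0]
    _ = ∫ p in polarCoord.target,
          p.1 • Set.indicator (Metric.ball (0:ℂ) 1) (fun u => g (z + u))
            (Complex.polarCoord.symm p) := by
        rw [Complex.integral_comp_polarCoord_symm]
    _ = ∫ p in polarCoord.target,
          Set.indicator (Set.Ioo (0:ℝ) 1 ×ˢ Set.Ioo (-π) π)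
            (fun p : ℝ × ℝ => p.1 • g (z + Complex.polarCoord.symm p)) p := by
        apply MeasureTheory.setIntegral_congr_fun polarCoord.open_target.measurableSet
        rintro ⟨r, θ⟩ hp
        obtain ⟨hr, hθ⟩ := hp
        simp only [Set.mem_Ioi] at hr
        have habs : ‖Complex.polarCoord.symm (r, θ)‖ = |r| :=
          Complex.norm_polarCoord_symm _
        have hballiff : Complex.polarCoord.symm (r, θ) ∈ Metric.ball (0:ℂ) 1 ↔ r < 1 := by
          rw [Metric.mem_ball, dist_zero_right, habs,
            abs_of_pos hr]
        by_cases h1 : r < 1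
        · simp only [Set.indicator_of_mem (hballiff.2 h1)]
          rw [Set.indicator_of_mem]
          exact ⟨⟨hr, h1⟩, hθ⟩
        · simp only [Set.indicator_of_notMem (fun h => h1 (hballiff.1 h)), smul_zero]
          rw [Set.indicator_of_notMem]
          rintro ⟨⟨-, h⟩, -⟩
          exact h1 h
    _ = ∫ p in Set.Ioo (0:ℝ) 1 ×ˢ Set.Ioo (-π) π,
          p.1 • g (z + Complex.polarCoord.symm p) := by
        rw [MeasureTheory.setIntegral_indicator
          ((measurableSet_Ioo).prod (measurableSet_Ioo))]
        have hsub : (Set.Ioo (0:ℝ) 1 ×ˢ Set.Ioo (-π) π) ⊆ polarCoord.target :=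
          Set.prod_mono Set.Ioo_subset_Ioi_self subset_rfl
        rw [Set.inter_eq_self_of_subset_right hsub]
    _ = ∫ r in Set.Ioo (0:ℝ) 1, ∫ θ in Set.Ioo (-π) π,
          (r : ℝ) • g (z + Complex.polarCoord.symm (r, θ)) := by
        rw [MeasureTheory.Measure.volume_eq_prod]
        apply MeasureTheory.setIntegral_prod
        rw [← MeasureTheory.Measure.volume_eq_prod]
        apply (hcont.continuousOn.integrableOn_compact
          ((isCompact_Icc (α := ℝ)).prod (isCompact_Icc (α := ℝ) (a := -π) (b := π)))).mono_set
        exact Set.prod_mono Set.Ioo_subset_Icc_self Set.Ioo_subset_Icc_self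
    _ = ∫ r in Set.Ioo (0:ℝ) 1, (r * (2*π)) • g z := by
        apply MeasureTheory.setIntegral_congr_fun measurableSet_Ioo
        intro r hr
        show ∫ θ in Set.Ioo (-π) π, r • g (z + Complex.polarCoord.symm (r, θ))
          = (r * (2*π)) • g z
        rw [MeasureTheory.integral_smul, circle_mvp' g hg z hr.1, smul_smul]
    _ = (∫ r in Set.Ioo (0:ℝ) 1, r * (2*π)) • g z := by
        rw [integral_smul_const]
    _ = (π : ℂ) * g z := by
        have hval : (∫ r in Set.Ioo (0:ℝ) 1, r * (2*π)) = π := by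
          rw [← MeasureTheory.integral_Ioc_eq_integral_Ioo,
            ← intervalIntegral.integral_of_le (by norm_num : (0:ℝ) ≤ 1),
            intervalIntegral.integral_mul_const, integral_id]
          ring
        rw [hval, Complex.real_smul]

lemma key_submean (g : ℂ → ℂ) (hg : Differentiable ℂ g) {p : ℝ} (hp : 1 ≤ p) (z : ℂ) :
    ‖g z‖ ^ p ≤ π⁻¹ * ∫ w in Metric.ball z 1, ‖g w‖ ^ p := by
  have hp0 : 0 ≤ p := le_trans zero_le_one hp
  have hvol : (volume (Metric.ball z 1)).toReal = π := by
    simp [Complex.volume_ball]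
  have hvol0 : volume (Metric.ball z 1) ≠ 0 := (measure_ball_pos volume z one_pos).ne'
  have hvolt : volume (Metric.ball z 1) ≠ ⊤ := measure_ball_lt_top.ne
  have habscont : Continuous fun w : ℂ => ‖g w‖ :=
    continuous_norm.comp hg.continuous
  have habspcont : Continuous fun w : ℂ => ‖g w‖ ^ p :=
    habscont.rpow_const fun _ => Or.inr hp0
  have h1 : ‖g z‖ ≤ ⨍ w in Metric.ball z 1, ‖g w‖ := by
    have hm := ball_mvp g hg z
    have heq : ‖g z‖ = π⁻¹ * ‖∫ w in Metric.ball z 1, g w‖ := by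
      rw [hm, norm_mul, Complex.norm_real, Real.norm_of_nonneg Real.pi_pos.le]
      field_simp
    rw [heq, setAverage_eq, measureReal_def, hvol, smul_eq_mul]
    apply mul_le_mul_of_nonneg_left _ (inv_nonneg.2 Real.pi_pos.le)
    have := MeasureTheory.norm_integral_le_integral_norm
      (μ := volume.restrict (Metric.ball z 1)) (f := g)
    simpa using this
  have h2 : (⨍ w in Metric.ball z 1, ‖g w‖) ^ p
      ≤ ⨍ w in Metric.ball z 1, ‖g w‖ ^ p := by
    apply ConvexOn.map_set_average_le (convexOn_rpow hp)
      (fun x _ => (Real.continuousAt_rpow_const x p (Or.inr hp0)).continuousWithinAt)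
      isClosed_Ici hvol0 hvolt
    · exact Filter.Eventually.of_forall fun w => norm_nonneg _
    · exact cont_intOn habscont z 1
    · exact cont_intOn habspcont z 1
  calc ‖g z‖ ^ p
      ≤ (⨍ w in Metric.ball z 1, ‖g w‖) ^ p :=
        Real.rpow_le_rpow (norm_nonneg _) h1 hp0
    _ ≤ ⨍ w in Metric.ball z 1, ‖g w‖ ^ p := h2
    _ = π⁻¹ * ∫ w in Metric.ball z 1, ‖g w‖ ^ p := by
        rw [setAverage_eq, measureReal_def, hvol, smul_eq_mul]

/-- local pointwise estimate for the Fock spaces. -/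
theorem fock_local_pointwise_estimate (p : ℝ) (hp : 1 ≤ p) :
    ∃ C > (0 : ℝ), ∀ f : ℂ → ℂ, Differentiable ℂ f → ∀ z : ℂ,
      ‖f z‖ ^ p * Real.exp (-(p * ‖z‖ ^ 2) / 2) ≤
        C * ∫ w in Metric.ball z 1,
          ‖f w‖ ^ p * Real.exp (-(p * ‖w‖ ^ 2) / 2) := by
  have hp0 : 0 ≤ p := le_trans zero_le_one hp
  refine ⟨Real.exp (p/2) / π, by positivity, ?_⟩
  intro f hf z
  set F : ℂ → ℂ := fun w =>
    f w * Complex.exp (((‖z‖ ^ 2 / 2 : ℝ) : ℂ) - (starRingEnd ℂ) z * w) with hF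
  have hFd : Differentiable ℂ F :=
    hf.mul (((differentiable_const _).sub
      ((differentiable_const _).mul differentiable_id)).cexp)
  have habsF : ∀ w, ‖F w‖ ^ p
      = ‖f w‖ ^ p
        * Real.exp (p * (‖z - w‖ ^ 2 - ‖w‖ ^ 2) / 2) := by
    intro w
    have hre : (((‖z‖ ^ 2 / 2 : ℝ) : ℂ) - (starRingEnd ℂ) z * w).re
        = (‖z - w‖ ^ 2 - ‖w‖ ^ 2) / 2 := by
      simp only [Complex.sub_re, Complex.ofReal_re, Complex.mul_re, Complex.conj_re,
        Complex.conj_im, Complex.sq_norm, Complex.normSq_apply, Complex.sub_im]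
      ring
    have h1 : ‖F w‖ = ‖f w‖
        * Real.exp ((‖z - w‖ ^ 2 - ‖w‖ ^ 2) / 2) := by
      rw [hF]
      simp only
      rw [norm_mul, Complex.norm_exp, hre]
    rw [h1, Real.mul_rpow (norm_nonneg _) (Real.exp_nonneg _), ← Real.exp_mul]
    congr 1
    ring
  have hFz : ‖F z‖ ^ p
      = ‖f z‖ ^ p * Real.exp (-(p * ‖z‖ ^ 2) / 2) := by
    rw [habsF z]
    congr 1
    rw [sub_self]
    simp only [norm_zero]
    congr 1
    ring
  have hcw : Continuous fun w : ℂ =>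
      ‖f w‖ ^ p * Real.exp (-(p * ‖w‖ ^ 2) / 2) := by
    apply Continuous.mul
    · exact (continuous_norm.comp hf.continuous).rpow_const fun _ => Or.inr hp0
    · apply Real.continuous_exp.comp
      exact (((continuous_const.mul (continuous_norm.pow 2)).neg).div_const 2)
  have hcF : Continuous fun w : ℂ => ‖F w‖ ^ p :=
    (continuous_norm.comp hFd.continuous).rpow_const fun _ => Or.inr hp0
  have hbound : ∀ w ∈ Metric.ball z 1, ‖F w‖ ^ p
      ≤ Real.exp (p/2) * (‖f w‖ ^ p * Real.exp (-(p * ‖w‖ ^ 2) / 2)) := by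
    intro w hw
    have hlt : ‖z - w‖ < 1 := by
      rw [Metric.mem_ball, Complex.dist_eq] at hw
      rwa [norm_sub_rev z w]
    have hsq : ‖z - w‖ ^ 2 ≤ 1 := by
      nlinarith [norm_nonneg (z - w)]
    have hexp : Real.exp (p * (‖z - w‖ ^ 2 - ‖w‖ ^ 2) / 2)
        ≤ Real.exp (p/2) * Real.exp (-(p * ‖w‖ ^ 2) / 2) := by
      rw [← Real.exp_add]
      apply Real.exp_le_exp.2
      nlinarith
    rw [habsF w]
    calc ‖f w‖ ^ p * Real.exp (p * (‖z - w‖ ^ 2 - ‖w‖ ^ 2) / 2)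
        ≤ ‖f w‖ ^ p
          * (Real.exp (p/2) * Real.exp (-(p * ‖w‖ ^ 2) / 2)) :=
          mul_le_mul_of_nonneg_left hexp (Real.rpow_nonneg (norm_nonneg _) p)
      _ = Real.exp (p/2) * (‖f w‖ ^ p * Real.exp (-(p * ‖w‖ ^ 2) / 2)) := by
          ring
  calc ‖f z‖ ^ p * Real.exp (-(p * ‖z‖ ^ 2) / 2)
      = ‖F z‖ ^ p := hFz.symm
    _ ≤ π⁻¹ * ∫ w in Metric.ball z 1, ‖F w‖ ^ p := key_submean F hFd hp z
    _ ≤ π⁻¹ * ∫ w in Metric.ball z 1, Real.exp (p/2)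
          * (‖f w‖ ^ p * Real.exp (-(p * ‖w‖ ^ 2) / 2)) := by
        apply mul_le_mul_of_nonneg_left _ (inv_nonneg.2 Real.pi_pos.le)
        exact MeasureTheory.setIntegral_mono_on (cont_intOn hcF z 1)
          (cont_intOn (continuous_const.mul hcw) z 1) measurableSet_ball hbound
    _ = (Real.exp (p/2) / π) * ∫ w in Metric.ball z 1,
          ‖f w‖ ^ p * Real.exp (-(p * ‖w‖ ^ 2) / 2) := by
        rw [MeasureTheory.integral_const_mul]
        ring
end

section
/- Let u : ℂ → ℂ be entire and let a, b ∈ ℂ with |a| = 1. If sup_{z∈ℂ} |u(z)| · exp((|a·z + b|² − |z|²)/2) < ∞, then u(z) = u(0) · exp(−a · conj(b) · z) for all z ∈ ℂ. -/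
/-- if `|a| = 1` and `M(u, ψ) < ∞` for `ψ(z) = a z + b`, then
`u(z) = u(0) · exp(−a · conj(b) · z)`, i.e. `u = u(0) K_{-conj(a) b}`. -/
theorem weight_form_of_bounded_of_abs_eq_one (u : ℂ → ℂ) (hu : Differentiable ℂ u)
    (a b : ℂ) (ha : ‖a‖ = 1)
    (hM : ∃ M : ℝ, ∀ z : ℂ, ‖u z‖ *
        Real.exp ((‖a * z + b‖ ^ 2 - ‖z‖ ^ 2) / 2) ≤ M) :
    ∀ z : ℂ, u z = u 0 * Complex.exp (-(a * (starRingEnd ℂ) b * z)) := by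
  obtain ⟨M, hMle⟩ := hM
  set c : ℂ := a * (starRingEnd ℂ) b with hc
  set g : ℂ → ℂ := fun z => u z * Complex.exp (c * z) with hgdef
  have hg : Differentiable ℂ g :=
    hu.mul (((differentiable_const c).mul differentiable_id).cexp)
  have hbdd : ∀ z, ‖g z‖ ≤ M := by
    intro z
    have key : (c * z).re ≤ (‖a * z + b‖ ^ 2 - ‖z‖ ^ 2) / 2 := by
      have h1 : ‖a * z + b‖ ^ 2
          = ‖z‖ ^ 2 + 2 * (c * z).re + ‖b‖ ^ 2 := by
        simp only [Complex.sq_norm, Complex.normSq_add, Complex.normSq_mul]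
        have : Complex.normSq a = 1 := by
          rw [← Complex.sq_norm, ha]; norm_num
        rw [this]
        have : a * z * (starRingEnd ℂ) b = c * z := by rw [hc]; ring
        rw [this]; ring
      have hb2 : 0 ≤ ‖b‖ ^ 2 := sq_nonneg _
      nlinarith [sq_nonneg (‖b‖)]
    calc ‖g z‖ = ‖u z‖ * Real.exp ((c * z).re) := by
          simp [hgdef, map_mul, Complex.norm_exp]
      _ ≤ ‖u z‖ *
          Real.exp ((‖a * z + b‖ ^ 2 - ‖z‖ ^ 2) / 2) := by
          exact mul_le_mul_of_nonneg_left (Real.exp_le_exp.mpr key) (norm_nonneg _)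
      _ ≤ M := hMle z
  have hbound : Bornology.IsBounded (Set.range g) := by
    rw [isBounded_iff_forall_norm_le]
    exact ⟨M, by rintro _ ⟨z, rfl⟩; exact hbdd z⟩
  intro z
  have hconst : g z = g 0 := hg.apply_eq_apply_of_bounded hbound z 0
  have hg0 : g 0 = u 0 := by simp [hgdef]
  have hne : Complex.exp (c * z) ≠ 0 := Complex.exp_ne_zero _
  have : u z * Complex.exp (c * z) = u 0 := by rw [← hg0]; exact hconst
  rw [Complex.exp_neg]
  field_simp
  linear_combination this
end

section
/- Let a ∈ ℂ with |a| < 1. Then for every natural number n ≥ 1, |1 − a^{2n}| · (1 − |a|²) ≤ |1 − a²| · (1 − |a|^{2n}). -/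
/-- for `|a| < 1` and `n ≥ 1`,
`|1 − a^{2n}|·(1 − |a|²) ≤ |1 − a²|·(1 − |a|^{2n})`. -/
theorem abs_one_sub_pow_ineq (a : ℂ) (ha : ‖a‖ < 1) (n : ℕ) (hn : 1 ≤ n) :
    ‖1 - a ^ (2 * n)‖ * (1 - ‖a‖ ^ 2) ≤
      ‖1 - a ^ 2‖ * (1 - ‖a‖ ^ (2 * n)) := by
  set b : ℂ := a ^ 2 with hb
  set r : ℝ := ‖a‖ ^ 2 with hr
  have hrb : ‖b‖ = r := by simp [hb, hr, map_pow]
  have hr0 : 0 ≤ r := by positivity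
  have hr1 : 1 - r ≥ 0 := by
    have : r ≤ 1 := by
      have := pow_le_one₀ (norm_nonneg a) ha.le (n := 2)
      simpa [hr] using this
    linarith
  have hfac : (1 : ℂ) - b ^ n = (1 - b) * ∑ i ∈ Finset.range n, b ^ i := by
    have := geom_sum_mul b n
    have h2 : (1 - b) * ∑ i ∈ Finset.range n, b ^ i
        = -((∑ i ∈ Finset.range n, b ^ i) * (b - 1)) := by ring
    rw [h2, this]; ring
  have hreal : (1 : ℝ) - r ^ n = (1 - r) * ∑ i ∈ Finset.range n, r ^ i := by
    have := geom_sum_mul r n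
    nlinarith [this]
  have hkey : ‖1 - b ^ n‖ ≤
      ‖1 - b‖ * ∑ i ∈ Finset.range n, r ^ i := by
    rw [hfac, norm_mul]
    gcongr
    calc ‖∑ i ∈ Finset.range n, b ^ i‖
        ≤ ∑ i ∈ Finset.range n, ‖b ^ i‖ :=
          norm_sum_le _ _
      _ = ∑ i ∈ Finset.range n, r ^ i := by
          simp [map_pow, hrb]
  have hpow : ‖a‖ ^ (2 * n) = r ^ n := by
    rw [hr, ← pow_mul]
  have hbn : a ^ (2 * n) = b ^ n := by rw [hb, ← pow_mul]
  rw [hbn, hpow, hreal]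
  calc ‖1 - b ^ n‖ * (1 - r)
      ≤ (‖1 - b‖ * ∑ i ∈ Finset.range n, r ^ i) * (1 - r) := by
        gcongr
    _ = ‖1 - b‖ * ((1 - r) * ∑ i ∈ Finset.range n, r ^ i) := by ring
end

section
/- Let a, b, c ∈ ℂ with |a| = 1, let ψ(z) = a·z + b and u(z) = c · exp(−a·conj(b)·z), and set u_n(z) := ∏_{j=0}^{n−1} u(ψ^{[j]}(z)). Then for every natural number n ≥ 1, sup_{z∈ℂ} |u_n(z)| · exp((|ψ^{[n]}(z)|² − |z|²)/2) = (|c| · e^{|b|²/2})^n. Consequently, sup_{n≥1} sup_{z∈ℂ} |u_n(z)| · exp((|ψ^{[n]}(z)|² − |z|²)/2) < ∞ if and only if |c| ≤ e^{−|b|²/2}. -/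
/-- for `ψ(z) = az + b` with `|a| = 1` and `u(z) = c·exp(−a·conj(b)·z)`,
the norm of the `n`-th power `M(u_n, ψ^{[n]})` equals `(|c|·e^{|b|²/2})^n`; consequently the
family is uniformly bounded iff `|c| ≤ e^{−|b|²/2}`. -/
theorem iterate_sup_formula (a b c : ℂ) (ha : ‖a‖ = 1) (ψ u : ℂ → ℂ)
    (hψ : ∀ z : ℂ, ψ z = a * z + b)
    (hu : ∀ z : ℂ, u z = c * Complex.exp (-(a * (starRingEnd ℂ) b * z)))
    (un : ℕ → ℂ → ℂ)
    (hun : ∀ (n : ℕ) (z : ℂ), un n z = ∏ j ∈ Finset.range n, u (ψ^[j] z)) :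
    (∀ n : ℕ, 1 ≤ n →
      (⨆ z : ℂ, ‖un n z‖ *
          Real.exp ((‖ψ^[n] z‖ ^ 2 - ‖z‖ ^ 2) / 2)) =
        (‖c‖ * Real.exp (‖b‖ ^ 2 / 2)) ^ n) ∧
    ((∃ M : ℝ, ∀ n : ℕ, 1 ≤ n → ∀ z : ℂ,
        ‖un n z‖ *
          Real.exp ((‖ψ^[n] z‖ ^ 2 - ‖z‖ ^ 2) / 2) ≤ M) ↔
      ‖c‖ ≤ Real.exp (-(‖b‖ ^ 2) / 2)) := by
  set K := ‖c‖ * Real.exp (‖b‖ ^ 2 / 2) with hKdef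
  have hK0 : 0 ≤ K := mul_nonneg (norm_nonneg c) (Real.exp_pos _).le
  -- one-step identity: the quantity is the constant K
  have key : ∀ z : ℂ, ‖u z‖ *
      Real.exp ((‖ψ z‖ ^ 2 - ‖z‖ ^ 2) / 2) = K := by
    intro z
    have hna : Complex.normSq a = 1 := by
      rw [← Complex.sq_norm, ha]; norm_num
    have h1 : ‖a * z + b‖ ^ 2 =
        ‖z‖ ^ 2 + 2 * (a * z * (starRingEnd ℂ) b).re + ‖b‖ ^ 2 := by
      rw [Complex.sq_norm, Complex.sq_norm, Complex.sq_norm, Complex.normSq_add,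
        Complex.normSq_mul, hna]
      ring
    have h2 : -(a * (starRingEnd ℂ) b * z) = -(a * z * (starRingEnd ℂ) b) := by ring
    rw [hu, hψ, norm_mul, Complex.norm_exp, h1, h2, Complex.neg_re, hKdef, mul_assoc,
      ← Real.exp_add]
    congr 1
    ring
  -- n-step identity: the quantity is the constant K^n
  have hF : ∀ n : ℕ, ∀ z : ℂ, ‖un n z‖ *
      Real.exp ((‖ψ^[n] z‖ ^ 2 - ‖z‖ ^ 2) / 2) = K ^ n := by
    intro n
    induction n with
    | zero => intro z; simp [hun]
    | succ n ih =>
      intro z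
      have h1 : un (n + 1) z = un n z * u (ψ^[n] z) := by
        rw [hun, hun, Finset.prod_range_succ]
      have h2 : ψ^[n + 1] z = ψ (ψ^[n] z) := Function.iterate_succ_apply' ψ n z
      have hexp : (‖ψ (ψ^[n] z)‖ ^ 2 - ‖z‖ ^ 2) / 2
          = (‖ψ^[n] z‖ ^ 2 - ‖z‖ ^ 2) / 2
            + (‖ψ (ψ^[n] z)‖ ^ 2 - ‖ψ^[n] z‖ ^ 2) / 2 := by ring
      rw [h1, h2, norm_mul, hexp, Real.exp_add, pow_succ K n, ← ih z, ← key (ψ^[n] z)]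
      ring
  constructor
  · intro n _
    have h : (⨆ z : ℂ, ‖un n z‖ *
        Real.exp ((‖ψ^[n] z‖ ^ 2 - ‖z‖ ^ 2) / 2))
        = ⨆ _ : ℂ, K ^ n := by
      congr 1; funext z; exact hF n z
    rw [h, ciSup_const]
  · have hiff : ‖c‖ ≤ Real.exp (-(‖b‖ ^ 2) / 2) ↔ K ≤ 1 := by
      have he : (0 : ℝ) < Real.exp (‖b‖ ^ 2 / 2) := Real.exp_pos _
      have hE : Real.exp (-(‖b‖ ^ 2) / 2)
          = (Real.exp (‖b‖ ^ 2 / 2))⁻¹ := by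
        rw [← Real.exp_neg]; ring_nf
      rw [hE, hKdef]
      constructor
      · intro h
        calc ‖c‖ * Real.exp (‖b‖ ^ 2 / 2)
            ≤ (Real.exp (‖b‖ ^ 2 / 2))⁻¹ * Real.exp (‖b‖ ^ 2 / 2) :=
              mul_le_mul_of_nonneg_right h he.le
          _ = 1 := inv_mul_cancel₀ he.ne'
      · intro h
        calc ‖c‖
            = ‖c‖ * Real.exp (‖b‖ ^ 2 / 2)
              * (Real.exp (‖b‖ ^ 2 / 2))⁻¹ := by field_simp
          _ ≤ 1 * (Real.exp (‖b‖ ^ 2 / 2))⁻¹ :=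
              mul_le_mul_of_nonneg_right h (inv_nonneg.mpr he.le)
          _ = (Real.exp (‖b‖ ^ 2 / 2))⁻¹ := one_mul _
    rw [hiff]
    constructor
    · rintro ⟨M, hM⟩
      by_contra hK1
      push_neg at hK1
      obtain ⟨n, hn⟩ := pow_unbounded_of_one_lt M hK1
      have h1 : K ^ n ≤ K ^ (n + 1) :=
        pow_le_pow_right₀ hK1.le (Nat.le_succ n)
      have h2 := hM (n + 1) (Nat.le_add_left 1 n) 0
      rw [hF (n + 1) 0] at h2
      linarith
    · intro hK1
      refine ⟨1, fun n _ z => ?_⟩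
      rw [hF n z]
      exact pow_le_one₀ hK0 hK1
end

section
/- Let 1 ≤ p < ∞ and let a, b, c ∈ ℂ with |a| = 1; set ψ(z) = a·z + b, u(z) = c · exp(−a·conj(b)·z), and u_n(z) := ∏_{j=0}^{n−1} u(ψ^{[j]}(z)). Then the following are equivalent: (i) there exists C > 0 such that ‖u_n·(f∘ψ^{[n]})‖_p ≤ C·‖f‖_p for every n ∈ ℕ and every entire f : ℂ → ℂ (i.e., W_{(u,ψ)} is power bounded on F_p); (ii) sup_{n∈ℕ} ‖u_n‖_p < ∞; (iii) |c| ≤ e^{−|b|²/2}. -/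
open MeasureTheory

/-- The Fock space norm `‖f‖_p` for `1 ≤ p < ∞`. -/
noncomputable def fockNorm (p : ℝ) (f : ℂ → ℂ) : ℝ :=
  ((p / (2 * Real.pi)) * ∫ z : ℂ, ‖f z‖ ^ p *
    Real.exp (-(p * ‖z‖ ^ 2) / 2)) ^ (1 / p)

lemma gauss_int (t : ℝ) (ht : 0 < t) :
    ∫ z : ℂ, Real.exp (-(t * ‖z‖ ^ 2)) = Real.pi / t := by
  have h := Complex.volume_preserving_equiv_real_prod.integral_comp
    Complex.measurableEquivRealProd.measurableEmbedding
    (fun q : ℝ × ℝ => Real.exp (-(t * q.1 ^ 2)) * Real.exp (-(t * q.2 ^ 2)))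
  have h2 : ∀ z : ℂ, Real.exp (-(t * z.re ^ 2)) * Real.exp (-(t * z.im ^ 2))
      = Real.exp (-(t * ‖z‖ ^ 2)) := by
    intro z
    rw [← Real.exp_add, Complex.sq_norm, Complex.normSq_apply]
    congr 1; ring
  rw [show (fun z : ℂ => Real.exp (-(t * ‖z‖ ^ 2)))
      = fun z : ℂ => Real.exp (-(t * z.re ^ 2)) * Real.exp (-(t * z.im ^ 2)) from
    funext fun z => (h2 z).symm]
  rw [show (∫ z : ℂ, Real.exp (-(t * z.re ^ 2)) * Real.exp (-(t * z.im ^ 2)))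
      = ∫ q : ℝ × ℝ, Real.exp (-(t * q.1 ^ 2)) * Real.exp (-(t * q.2 ^ 2)) from h]
  rw [MeasureTheory.Measure.volume_eq_prod, MeasureTheory.integral_prod_mul (fun x : ℝ => Real.exp (-(t * x ^ 2))) (fun y : ℝ => Real.exp (-(t * y ^ 2)))]
  simp only [neg_mul_eq_neg_mul]; rw [integral_gaussian]
  exact Real.mul_self_sqrt (div_nonneg Real.pi_pos.le ht.le)

lemma fockNorm_nonneg (p : ℝ) (hp : 1 ≤ p) (f : ℂ → ℂ) : 0 ≤ fockNorm p f := by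
  unfold fockNorm
  apply Real.rpow_nonneg
  apply mul_nonneg
  · have := Real.pi_pos; positivity
  · apply integral_nonneg
    intro z
    positivity

lemma fockNorm_one (p : ℝ) (hp : 1 ≤ p) : fockNorm p (fun _ => 1) = 1 := by
  have hp0 : 0 < p := lt_of_lt_of_le one_pos hp
  unfold fockNorm
  have : ∀ z : ℂ, ‖((fun _ : ℂ => (1:ℂ)) z)‖ ^ p *
      Real.exp (-(p * ‖z‖ ^ 2) / 2) = Real.exp (-((p/2) * ‖z‖ ^ 2)) := by
    intro z
    simp only [norm_one, Real.one_rpow, one_mul]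
    congr 1; ring
  rw [show (fun z : ℂ => ‖((fun _ : ℂ => (1:ℂ)) z)‖ ^ p *
      Real.exp (-(p * ‖z‖ ^ 2) / 2)) = fun z => Real.exp (-((p/2) * ‖z‖ ^ 2))
    from funext this]
  rw [gauss_int (p/2) (by positivity)]
  rw [show p / (2 * Real.pi) * (Real.pi / (p / 2)) = 1 by
    field_simp]
  exact Real.one_rpow _

lemma fock_step (p : ℝ) (hp : 1 ≤ p) (a b c : ℂ) (ha : ‖a‖ = 1) (ψ u : ℂ → ℂ)
    (hψ : ∀ z : ℂ, ψ z = a * z + b)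
    (hu : ∀ z : ℂ, u z = c * Complex.exp (-(a * (starRingEnd ℂ) b * z)))
    (g : ℂ → ℂ) :
    fockNorm p (fun z => u z * g (ψ z)) =
      (‖c‖ * Real.exp (‖b‖ ^ 2 / 2)) * fockNorm p g := by
  have hp0 : 0 < p := lt_of_lt_of_le one_pos hp
  set L : ℝ := ‖c‖ * Real.exp (‖b‖ ^ 2 / 2) with hLdef
  have hL0 : 0 ≤ L := mul_nonneg (norm_nonneg _) (Real.exp_pos _).le
  -- expansion of |az+b|^2
  have hexp : ∀ z : ℂ, ‖(ψ z)‖ ^ 2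
      = ‖z‖ ^ 2 + 2 * (a * (starRingEnd ℂ) b * z).re + ‖b‖ ^ 2 := by
    intro z
    rw [hψ, Complex.sq_norm, Complex.sq_norm, Complex.sq_norm, Complex.normSq_add,
      Complex.normSq_mul]
    have ha2 : Complex.normSq a = 1 := by rw [← Complex.sq_norm, ha, one_pow]
    rw [ha2, one_mul]
    have : a * z * (starRingEnd ℂ) b = a * (starRingEnd ℂ) b * z := by ring
    rw [this]
    ring
  -- base pointwise identity
  have hbase : ∀ z : ℂ, ‖(u z)‖ * Real.exp (-(‖z‖ ^ 2) / 2)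
      = L * Real.exp (-(‖(ψ z)‖ ^ 2) / 2) := by
    intro z
    rw [hu, norm_mul, Complex.norm_exp, hexp z, hLdef]
    rw [Complex.neg_re, mul_assoc, ← Real.exp_add, mul_assoc (‖c‖), ← Real.exp_add]
    congr 1
    ring_nf
  -- pointwise identity for the integrands
  have hpoint : ∀ z : ℂ, ‖(u z * g (ψ z))‖ ^ p *
        Real.exp (-(p * ‖z‖ ^ 2) / 2)
      = L ^ p * (‖(g (ψ z))‖ ^ p *
        Real.exp (-(p * ‖(ψ z)‖ ^ 2) / 2)) := by
    intro z
    have e1 : ∀ s : ℝ, Real.exp (-(p * s) / 2) = Real.exp (-s / 2) ^ p := by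
      intro s
      rw [← Real.exp_mul]
      congr 1; ring
    rw [norm_mul, e1, e1,
      ← Real.mul_rpow (mul_nonneg (norm_nonneg _) (norm_nonneg _))
        (Real.exp_pos _).le,
      ← Real.mul_rpow (norm_nonneg _) (Real.exp_pos _).le,
      ← Real.mul_rpow hL0 (mul_nonneg (norm_nonneg _) (Real.exp_pos _).le)]
    congr 1
    calc ‖(u z)‖ * ‖(g (ψ z))‖ * Real.exp (-‖z‖ ^ 2 / 2)
        = ‖(g (ψ z))‖ * (‖(u z)‖ * Real.exp (-(‖z‖ ^ 2) / 2)) := by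
          ring
      _ = ‖(g (ψ z))‖ * (L * Real.exp (-(‖(ψ z)‖ ^ 2) / 2)) := by
          rw [hbase z]
      _ = L * (‖(g (ψ z))‖ * Real.exp (-‖(ψ z)‖ ^ 2 / 2)) := by ring
  -- change of variables
  have hrot : ∀ F : ℂ → ℝ, (∫ z : ℂ, F (ψ z)) = ∫ w : ℂ, F w := by
    intro F
    have hamem : a ∈ Metric.sphere (0:ℂ) 1 := by
      simp [mem_sphere_zero_iff_norm, ha]
    have h1 : (∫ z : ℂ, F (a * z + b)) = ∫ z : ℂ, F (z + b) := by
      exact MeasureTheory.integral_comp (rotation ⟨a, hamem⟩) (fun w => F (w + b))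
    have h2 : (∫ z : ℂ, F (z + b)) = ∫ z : ℂ, F z :=
      integral_add_right_eq_self F b
    simp only [hψ]
    rw [h1, h2]
  unfold fockNorm
  rw [show (fun z : ℂ => ‖((fun z => u z * g (ψ z)) z)‖ ^ p *
      Real.exp (-(p * ‖z‖ ^ 2) / 2))
    = fun z : ℂ => L ^ p * ((fun w : ℂ => ‖(g w)‖ ^ p *
      Real.exp (-(p * ‖w‖ ^ 2) / 2)) (ψ z)) from funext fun z => hpoint z]
  rw [MeasureTheory.integral_const_mul,
    hrot (fun w : ℂ => ‖(g w)‖ ^ p * Real.exp (-(p * ‖w‖ ^ 2) / 2))]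
  have hI : 0 ≤ ∫ w : ℂ, ‖(g w)‖ ^ p * Real.exp (-(p * ‖w‖ ^ 2) / 2) := by
    apply integral_nonneg; intro w; positivity
  have hc : 0 ≤ p / (2 * Real.pi) := by
    have := Real.pi_pos; positivity
  rw [show p / (2 * Real.pi) * (L ^ p *
      ∫ w : ℂ, ‖(g w)‖ ^ p * Real.exp (-(p * ‖w‖ ^ 2) / 2))
    = L ^ p * (p / (2 * Real.pi) *
      ∫ w : ℂ, ‖(g w)‖ ^ p * Real.exp (-(p * ‖w‖ ^ 2) / 2)) by ring]
  rw [Real.mul_rpow (Real.rpow_nonneg hL0 _) (mul_nonneg hc hI)]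
  congr 1
  rw [← Real.rpow_mul hL0, mul_one_div, div_self (ne_of_gt hp0), Real.rpow_one]

lemma fock_iter (p : ℝ) (hp : 1 ≤ p) (a b c : ℂ) (ha : ‖a‖ = 1) (ψ u : ℂ → ℂ)
    (hψ : ∀ z : ℂ, ψ z = a * z + b)
    (hu : ∀ z : ℂ, u z = c * Complex.exp (-(a * (starRingEnd ℂ) b * z)))
    (un : ℕ → ℂ → ℂ)
    (hun : ∀ (n : ℕ) (z : ℂ), un n z = ∏ j ∈ Finset.range n, u (ψ^[j] z))
    (n : ℕ) (g : ℂ → ℂ) :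
    fockNorm p (fun z => un n z * g (ψ^[n] z)) =
      (‖c‖ * Real.exp (‖b‖ ^ 2 / 2)) ^ n * fockNorm p g := by
  induction n generalizing g with
  | zero =>
    simp only [hun, Finset.range_zero, Finset.prod_empty, one_mul, Function.iterate_zero,
      id_eq, pow_zero]
  | succ n ih =>
    have key : (fun z => un (n+1) z * g (ψ^[n+1] z))
        = fun z => u z * ((fun w => un n w * g (ψ^[n] w)) (ψ z)) := by
      funext z
      simp only [hun, Finset.prod_range_succ', Function.iterate_succ_apply,
        Function.iterate_zero_apply]
      ring
    rw [key, fock_step p hp a b c ha ψ u hψ hu (fun w => un n w * g (ψ^[n] w)), ih]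
    ring

set_option maxHeartbeats 2000000 in
/-- Theorem 1.1 for `|a| = 1`: power boundedness of `W_{(u,ψ)}` on `F_p`,
boundedness of `(‖u_n‖_p)ₙ`, and `|c| ≤ e^{−|b|²/2}` (i.e. `|u(0)| ≤ e^{−|b|²/2}`) are
equivalent. -/
theorem power_bounded_tfae_abs_eq_one (p : ℝ) (hp : 1 ≤ p) (a b c : ℂ)
    (ha : ‖a‖ = 1) (ψ u : ℂ → ℂ)
    (hψ : ∀ z : ℂ, ψ z = a * z + b)
    (hu : ∀ z : ℂ, u z = c * Complex.exp (-(a * (starRingEnd ℂ) b * z)))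
    (un : ℕ → ℂ → ℂ)
    (hun : ∀ (n : ℕ) (z : ℂ), un n z = ∏ j ∈ Finset.range n, u (ψ^[j] z)) :
    ((∃ C > (0 : ℝ), ∀ (n : ℕ) (f : ℂ → ℂ), Differentiable ℂ f →
        fockNorm p (fun z => un n z * f (ψ^[n] z)) ≤ C * fockNorm p f) ↔
      ‖c‖ ≤ Real.exp (-(‖b‖ ^ 2) / 2)) ∧
    ((∃ M : ℝ, ∀ n : ℕ, fockNorm p (un n) ≤ M) ↔
      ‖c‖ ≤ Real.exp (-(‖b‖ ^ 2) / 2)) := by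
  set L : ℝ := ‖c‖ * Real.exp (‖b‖ ^ 2 / 2) with hLdef
  have hL0 : 0 ≤ L := mul_nonneg (norm_nonneg _) (Real.exp_pos _).le
  -- the condition is equivalent to L ≤ 1
  have hcond : ‖c‖ ≤ Real.exp (-(‖b‖ ^ 2) / 2) ↔ L ≤ 1 := by
    rw [hLdef]
    constructor
    · intro h
      calc ‖c‖ * Real.exp (‖b‖ ^ 2 / 2)
          ≤ Real.exp (-(‖b‖ ^ 2) / 2) * Real.exp (‖b‖ ^ 2 / 2) :=
            mul_le_mul_of_nonneg_right h (Real.exp_pos _).le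
        _ = 1 := by rw [← Real.exp_add]; rw [show -(‖b‖ ^ 2) / 2
              + ‖b‖ ^ 2 / 2 = 0 by ring, Real.exp_zero]
    · intro h
      calc ‖c‖ ≤ 1 / Real.exp (‖b‖ ^ 2 / 2) := by
            rw [le_div_iff₀ (Real.exp_pos _)]; exact h
        _ = Real.exp (-(‖b‖ ^ 2) / 2) := by
            rw [one_div, ← Real.exp_neg]; congr 1; ring
  -- norm of un n
  have hnorm : ∀ n : ℕ, fockNorm p (un n) = L ^ n := by
    intro n
    have h1 := fock_iter p hp a b c ha ψ u hψ hu un hun n (fun _ : ℂ => (1:ℂ))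
    simp only [mul_one] at h1
    rw [fockNorm_one p hp, mul_one, ← hLdef] at h1
    exact h1
  -- L^n bounded iff L ≤ 1
  have hpowiff : (∃ M : ℝ, ∀ n : ℕ, L ^ n ≤ M) ↔ L ≤ 1 := by
    constructor
    · rintro ⟨M, hM⟩
      by_contra hL
      push_neg at hL
      obtain ⟨n, hn⟩ := pow_unbounded_of_one_lt M hL
      exact absurd (hM n) (not_le.mpr hn)
    · intro hL
      exact ⟨1, fun n => pow_le_one₀ hL0 hL⟩
  constructor
  · rw [hcond]
    constructor
    · rintro ⟨C, _, hC⟩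
      rw [← hpowiff]
      refine ⟨C, fun n => ?_⟩
      have := hC n (fun _ => 1) (differentiable_const 1)
      rw [fock_iter p hp a b c ha ψ u hψ hu un hun n (fun _ : ℂ => (1:ℂ)),
        fockNorm_one p hp, mul_one, mul_one, ← hLdef] at this
      exact this
    · intro hL
      refine ⟨1, one_pos, fun n f _ => ?_⟩
      rw [fock_iter p hp a b c ha ψ u hψ hu un hun n f, one_mul, ← hLdef]
      calc L ^ n * fockNorm p f ≤ 1 * fockNorm p f :=
            mul_le_mul_of_nonneg_right (pow_le_one₀ hL0 hL) (fockNorm_nonneg p hp f)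
        _ = fockNorm p f := one_mul _
  · rw [hcond, ← hpowiff]
    constructor
    · rintro ⟨M, hM⟩
      exact ⟨M, fun n => by rw [← hnorm n]; exact hM n⟩
    · rintro ⟨M, hM⟩
      exact ⟨M, fun n => by rw [hnorm n]; exact hM n⟩
end

section
/- Let a, b ∈ ℂ with |a| < 1, set ψ(z) = a·z + b and z₀ = b/(1−a). Let a₀, a₁, a₂ ∈ ℂ with |a₂| < (1 − |a|²)/2, and let u(z) = exp(a₀ + a₁·z + a₂·z²) and u_n(z) := ∏_{j=0}^{n−1} u(ψ^{[j]}(z)). Then sup_{n≥1} sup_{z∈ℂ} |u_n(z)| · exp((|ψ^{[n]}(z)|² − |z|²)/2) < ∞ if and only if |u(z₀)| ≤ 1. -/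
set_option maxHeartbeats 1000000


/-- for compact `W_{(u,ψ)}` with `|a| < 1`, the quantities
`M(u_n, ψ^{[n]})` are uniformly bounded in `n ≥ 1` iff `|u(b/(1−a))| ≤ 1`. -/
theorem sup_iterate_bounded_iff (a b : ℂ) (ha : ‖a‖ < 1)
    (ψ : ℂ → ℂ) (hψ : ∀ z : ℂ, ψ z = a * z + b) (z₀ : ℂ) (hz₀ : z₀ = b / (1 - a))
    (a₀ a₁ a₂ : ℂ) (ha₂ : ‖a₂‖ < (1 - ‖a‖ ^ 2) / 2) (u : ℂ → ℂ)
    (hu : ∀ z : ℂ, u z = Complex.exp (a₀ + a₁ * z + a₂ * z ^ 2))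
    (un : ℕ → ℂ → ℂ)
    (hun : ∀ (n : ℕ) (z : ℂ), un n z = ∏ j ∈ Finset.range n, u (ψ^[j] z)) :
    (∃ M : ℝ, ∀ n : ℕ, 1 ≤ n → ∀ z : ℂ,
        ‖un n z‖ *
          Real.exp ((‖ψ^[n] z‖ ^ 2 - ‖z‖ ^ 2) / 2) ≤ M) ↔
      ‖u z₀‖ ≤ 1 := by
  have ha1 : (1 : ℂ) - a ≠ 0 := by
    intro h
    have : a = 1 := by linear_combination -h
    rw [this] at ha; simp at ha
  have hfix : a * z₀ + b = z₀ := by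
    rw [hz₀]; field_simp; ring
  have hiter : ∀ (j : ℕ) (z : ℂ), ψ^[j] z = z₀ + a ^ j * (z - z₀) := by
    intro j z
    induction j with
    | zero => simp
    | succ j ih =>
      rw [Function.iterate_succ_apply', ih, hψ]
      linear_combination hfix
  constructor
  · rintro ⟨M, hM⟩
    by_contra h
    push_neg at h
    have hc := pow_unbounded_of_one_lt M h
    obtain ⟨n, hn⟩ := hc
    have h2 : ‖u z₀‖ ^ n ≤ ‖u z₀‖ ^ (n + 1) :=
      pow_le_pow_right₀ h.le (Nat.le_succ n)
    have h3 := hM (n + 1) (Nat.le_add_left 1 n) z₀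
    have hz0fix : ∀ m : ℕ, ψ^[m] z₀ = z₀ := by intro m; rw [hiter]; ring
    rw [hun] at h3
    simp only [hz0fix] at h3
    rw [Finset.prod_const, Finset.card_range, norm_pow] at h3
    rw [sub_self, zero_div, Real.exp_zero, mul_one] at h3
    linarith
  · intro hu0
    set r : ℝ := ‖a‖ with hrdef
    have hr0 : 0 ≤ r := norm_nonneg a
    have hr1 : r < 1 := ha
    have h1r : (0:ℝ) < 1 - r := by linarith
    have h1r2 : (0:ℝ) < 1 - r ^ 2 := by nlinarith
    set L₀ : ℂ := a₀ + a₁ * z₀ + a₂ * z₀ ^ 2 with hL0def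
    have hL0 : L₀.re ≤ 0 := by
      have : ‖Complex.exp L₀‖ ≤ 1 := by rw [← hu z₀]; exact hu0
      rw [Complex.norm_exp] at this
      exact (Real.exp_le_one_iff).mp this
    set c₁ : ℂ := a₁ + 2 * a₂ * z₀ with hc1def
    set δ : ℝ := (1 - r ^ 2) / 2 - ‖a₂‖ with hδdef
    have hδ : 0 < δ := by rw [hδdef]; linarith
    set K : ℝ := ‖c₁‖ / (1 - r) + 2 * ‖z₀‖ with hKdef
    have hK : 0 ≤ K := by positivity
    refine ⟨Real.exp (K ^ 2 / (4 * δ)), ?_⟩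
    intro n hn z
    set w : ℂ := z - z₀ with hwdef
    set R : ℝ := ‖w‖ with hRdef
    have hR0 : 0 ≤ R := norm_nonneg w
    set q : ℝ := (r ^ 2) ^ n with hqdef
    have hq0 : 0 ≤ q := by positivity
    have hqr : q ≤ r ^ 2 := by
      calc (r ^ 2) ^ n ≤ (r ^ 2) ^ 1 :=
            pow_le_pow_of_le_one (by positivity) (by nlinarith) hn
        _ = r ^ 2 := pow_one _
    -- the multiplier as an exponential
    have hun2 : un n z = Complex.exp (∑ j ∈ Finset.range n,
        (L₀ + c₁ * (a ^ j * w) + a₂ * (a ^ j * w) ^ 2)) := by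
      rw [hun, Complex.exp_sum]
      refine Finset.prod_congr rfl ?_
      intro j _
      rw [hu, hiter]
      congr 1
      rw [hL0def, hc1def, hwdef]
      ring
    set S : ℂ := ∑ j ∈ Finset.range n, (L₀ + c₁ * (a ^ j * w) + a₂ * (a ^ j * w) ^ 2)
      with hSdef
    -- geometric sums
    have hg1 : ∑ j ∈ Finset.range n, r ^ j ≤ 1 / (1 - r) := by
      have hne : r ≠ 1 := ne_of_lt hr1
      rw [geom_sum_eq hne]
      have heq : (r ^ n - 1) / (r - 1) = (1 - r ^ n) / (1 - r) := by
        rw [div_eq_div_iff (sub_ne_zero.mpr hne) (by linarith)]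
        ring
      rw [heq]
      apply div_le_div₀ (by norm_num) (by nlinarith [pow_nonneg hr0 n]) h1r le_rfl
    have hg2 : ∑ j ∈ Finset.range n, (r ^ 2) ^ j = (1 - q) / (1 - r ^ 2) := by
      rw [geom_sum_eq (by nlinarith : r ^ 2 ≠ 1), hqdef]
      rw [div_eq_div_iff (by nlinarith) (by linarith)]
      ring
    -- bound on real part of S
    have hSre : S.re ≤ n * L₀.re + (‖c₁‖ * R) * (1 / (1 - r))
        + (‖a₂‖ * R ^ 2) * ((1 - q) / (1 - r ^ 2)) := by
      rw [hSdef, Complex.re_sum]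
      have hterm : ∀ j ∈ Finset.range n,
          (L₀ + c₁ * (a ^ j * w) + a₂ * (a ^ j * w) ^ 2).re ≤
            L₀.re + ‖c₁‖ * R * r ^ j + ‖a₂‖ * R ^ 2 * (r ^ 2) ^ j := by
        intro j _
        have h1 : (c₁ * (a ^ j * w)).re ≤ ‖c₁‖ * R * r ^ j := by
          calc (c₁ * (a ^ j * w)).re ≤ ‖c₁ * (a ^ j * w)‖ :=
                Complex.re_le_norm _
            _ = ‖c₁‖ * R * r ^ j := by
                rw [norm_mul, norm_mul, norm_pow, ← hrdef, ← hRdef]; ring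
        have h2 : (a₂ * (a ^ j * w) ^ 2).re ≤ ‖a₂‖ * R ^ 2 * (r ^ 2) ^ j := by
          calc (a₂ * (a ^ j * w) ^ 2).re ≤ ‖a₂ * (a ^ j * w) ^ 2‖ :=
                Complex.re_le_norm _
            _ = ‖a₂‖ * R ^ 2 * (r ^ 2) ^ j := by
                rw [norm_mul, norm_pow, norm_mul, norm_pow, ← hrdef, ← hRdef]; ring
        simp only [Complex.add_re]
        linarith
      calc ∑ j ∈ Finset.range n, (L₀ + c₁ * (a ^ j * w) + a₂ * (a ^ j * w) ^ 2).re
          ≤ ∑ j ∈ Finset.range n,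
            (L₀.re + ‖c₁‖ * R * r ^ j + ‖a₂‖ * R ^ 2 * (r ^ 2) ^ j) :=
            Finset.sum_le_sum hterm
        _ = n * L₀.re + (‖c₁‖ * R) * (∑ j ∈ Finset.range n, r ^ j)
            + (‖a₂‖ * R ^ 2) * (∑ j ∈ Finset.range n, (r ^ 2) ^ j) := by
            rw [Finset.sum_add_distrib, Finset.sum_add_distrib, Finset.sum_const,
              Finset.card_range, ← Finset.mul_sum, ← Finset.mul_sum]
            push_cast; ring
        _ ≤ _ := by
            rw [hg2]
            have := mul_le_mul_of_nonneg_left hg1 (by positivity :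
              (0:ℝ) ≤ ‖c₁‖ * R)
            linarith
    -- bound on the weight exponent
    have hD : (‖ψ^[n] z‖ ^ 2 - ‖z‖ ^ 2) / 2 ≤
        -((1 - q) / 2) * R ^ 2 + 2 * ‖z₀‖ * R := by
      have hz : z = z₀ + w := by rw [hwdef]; ring
      have e1 : ‖ψ^[n] z‖ ^ 2 = Complex.normSq (z₀ + a ^ n * w) := by
        rw [hiter, Complex.sq_norm, ← hwdef]
      have e2 : ‖z‖ ^ 2 = Complex.normSq (z₀ + w) := by
        rw [Complex.sq_norm]; exact congrArg _ hz
      rw [e1, e2, Complex.normSq_add, Complex.normSq_add]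
      have e3 : Complex.normSq (a ^ n * w) = q * R ^ 2 := by
        rw [← Complex.sq_norm, norm_mul, norm_pow, ← hrdef, ← hRdef, hqdef]
        ring
      have e4 : Complex.normSq w = R ^ 2 := by rw [← Complex.sq_norm, hRdef]
      have b1 : (z₀ * (starRingEnd ℂ) (a ^ n * w)).re ≤ ‖z₀‖ * R := by
        calc (z₀ * (starRingEnd ℂ) (a ^ n * w)).re
            ≤ ‖z₀ * (starRingEnd ℂ) (a ^ n * w)‖ := Complex.re_le_norm _
          _ = ‖z₀‖ * (r ^ n * R) := by
              rw [norm_mul, Complex.norm_conj, norm_mul, norm_pow, ← hrdef, ← hRdef]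
          _ ≤ ‖z₀‖ * (1 * R) :=
              mul_le_mul_of_nonneg_left
                (mul_le_mul_of_nonneg_right (pow_le_one₀ hr0 hr1.le) hR0)
                (norm_nonneg z₀)
          _ = ‖z₀‖ * R := by ring
      have b2 : -(z₀ * (starRingEnd ℂ) w).re ≤ ‖z₀‖ * R := by
        calc -(z₀ * (starRingEnd ℂ) w).re
            ≤ |(z₀ * (starRingEnd ℂ) w).re| := neg_le_abs _
          _ ≤ ‖z₀ * (starRingEnd ℂ) w‖ := Complex.abs_re_le_norm _
          _ = ‖z₀‖ * R := by
              rw [norm_mul, Complex.norm_conj, ← hRdef]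
      rw [e3, e4]
      linarith
    -- key quadratic inequality
    have hkey : ‖a₂‖ * ((1 - q) / (1 - r ^ 2)) ≤ (1 - q) / 2 - δ := by
      have ha2' : ‖a₂‖ = (1 - r ^ 2) / 2 - δ := by rw [hδdef]; ring
      have hdivge : (1:ℝ) ≤ (1 - q) / (1 - r ^ 2) := by
        rw [le_div_iff₀ h1r2]; linarith
      have hdivmul : (1 - q) / (1 - r ^ 2) * (1 - r ^ 2) = 1 - q :=
        div_mul_cancel₀ _ (by linarith)
      rw [ha2']
      nlinarith [hdivmul, mul_le_mul_of_nonneg_left hdivge hδ.le]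
    -- assemble
    rw [hun2, Complex.norm_exp, ← Real.exp_add]
    apply Real.exp_le_exp.mpr
    have htot : S.re + (‖ψ^[n] z‖ ^ 2 - ‖z‖ ^ 2) / 2 ≤
        K * R - δ * R ^ 2 := by
      have hn0 : (n : ℝ) * L₀.re ≤ 0 :=
        mul_nonpos_of_nonneg_of_nonpos (Nat.cast_nonneg n) hL0
      have hq2 : (‖a₂‖ * R ^ 2) * ((1 - q) / (1 - r ^ 2)) ≤
          ((1 - q) / 2 - δ) * R ^ 2 := by
        have h := mul_le_mul_of_nonneg_right hkey (sq_nonneg R)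
        nlinarith [h]
      have hKR : K * R = ‖c₁‖ / (1 - r) * R + 2 * ‖z₀‖ * R := by
        rw [hKdef]; ring
      have h1 : (‖c₁‖ * R) * (1 / (1 - r)) =
          ‖c₁‖ / (1 - r) * R := by ring
      nlinarith [hSre, hD, hq2, hn0, hKR, h1]
    have hfin : K * R - δ * R ^ 2 ≤ K ^ 2 / (4 * δ) := by
      rw [le_div_iff₀ (by positivity)]
      nlinarith [sq_nonneg (K - 2 * δ * R)]
    linarith
end

section
/- Let a, b ∈ ℂ with |a| < 1, set z₀ = b/(1−a), and let u, f : ℂ → ℂ be entire with f not identically zero. Suppose λ ∈ ℂ, λ ≠ 0, and u(z) · f(a·z + b) = λ · f(z) for every z ∈ ℂ. Then there exists m ∈ ℕ such that λ = a^m · u(z₀). -/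
open Filter Topology

/-- every nonzero eigenvalue of the weighted composition operator
`f ↦ u·(f ∘ ψ)` with `ψ(z) = az + b`, `|a| < 1`, has the form `a^m · u(z₀)` where
`z₀ = b/(1−a)` is the fixed point of `ψ`. -/
theorem eigenvalue_form (a b : ℂ) (ha : ‖a‖ < 1) (z₀ : ℂ)
    (hz₀ : z₀ = b / (1 - a)) (u f : ℂ → ℂ) (hu : Differentiable ℂ u)
    (hf : Differentiable ℂ f) (hfne : f ≠ 0) (lam : ℂ) (hlam : lam ≠ 0)
    (heig : ∀ z : ℂ, u z * f (a * z + b) = lam * f z) :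
    ∃ m : ℕ, lam = a ^ m * u z₀ := by
  have ha1 : (1 : ℂ) - a ≠ 0 := by
    intro h
    have : a = 1 := by linear_combination -h
    rw [this] at ha; simp at ha
  have hfix : a * z₀ + b = z₀ := by
    rw [hz₀]; field_simp; ring
  have hfa := hf.analyticAt z₀
  have hne : analyticOrderAt f z₀ ≠ ⊤ := by
    intro htop
    rw [analyticOrderAt_eq_top] at htop
    apply hfne
    funext z
    exact (Complex.analyticOnNhd_univ_iff_differentiable.mpr hf).eqOn_zero_of_preconnected_of_eventuallyEq_zero
      isPreconnected_univ (Set.mem_univ z₀) htop (Set.mem_univ z)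
  obtain ⟨m, hm⟩ := WithTop.ne_top_iff_exists.mp hne
  obtain ⟨g, hg, hgz, hfg⟩ := (AnalyticAt.analyticOrderAt_eq_natCast hfa (n := m)).mp hm.symm
  refine ⟨m, ?_⟩
  have hcont : Tendsto (fun z : ℂ => a * z + b) (𝓝 z₀) (𝓝 z₀) := by
    have h := (Continuous.tendsto (by continuity : Continuous fun z : ℂ => a * z + b) z₀)
    rwa [hfix] at h
  have hev2 : ∀ᶠ z in 𝓝 z₀, f (a * z + b) = (a * (z - z₀)) ^ m * g (a * z + b) := by
    filter_upwards [hcont.eventually hfg] with z hz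
    rw [hz, smul_eq_mul]
    congr 2
    linear_combination hfix
  -- the eventual equation after cancelling (z - z₀)^m
  have hkey : ∀ᶠ z in 𝓝[≠] z₀, lam * g z = u z * a ^ m * g (a * z + b) := by
    have h1 : ∀ᶠ z in 𝓝[≠] z₀,
        f z = (z - z₀) ^ m • g z ∧ f (a * z + b) = (a * (z - z₀)) ^ m * g (a * z + b) :=
      nhdsWithin_le_nhds (hfg.and hev2)
    filter_upwards [h1, self_mem_nhdsWithin] with z hz hzne
    obtain ⟨hz1, hz2⟩ := hz
    have hzz : (z - z₀) ≠ 0 := sub_ne_zero.mpr hzne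
    have := heig z
    rw [hz1, hz2, smul_eq_mul, mul_pow] at this
    have hpow : (z - z₀) ^ m ≠ 0 := pow_ne_zero _ hzz
    have h2 : (z - z₀) ^ m * (lam * g z) = (z - z₀) ^ m * (u z * a ^ m * g (a * z + b)) := by
      linear_combination -this
    exact mul_left_cancel₀ hpow h2
  have hF : Tendsto (fun z => lam * g z) (𝓝[≠] z₀) (𝓝 (lam * g z₀)) :=
    ((continuousAt_const.mul hg.continuousAt).continuousWithinAt)
  have hgc : ContinuousAt (fun z => g (a * z + b)) z₀ := by
    have h1 : ContinuousAt (fun z : ℂ => a * z + b) z₀ := by fun_prop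
    have h2 : ContinuousAt g (a * z₀ + b) := by rw [hfix]; exact hg.continuousAt
    exact ContinuousAt.comp h2 h1
  have hG : Tendsto (fun z => u z * a ^ m * g (a * z + b)) (𝓝[≠] z₀)
      (𝓝 (u z₀ * a ^ m * g (a * z₀ + b))) :=
    (((hu.continuous.continuousAt.mul continuousAt_const).mul hgc).continuousWithinAt)
  have hfin := tendsto_nhds_unique (hG.congr' (hkey.mono fun z hz => hz.symm)) hF
  rw [hfix] at hfin
  exact mul_right_cancel₀ hgz (by linear_combination -hfin)
end

section
/- Let a ∈ ℂ with 0 < |a| < 1, let u : ℂ → ℂ be entire with u(0) ≠ 0, and let n ≥ 1 be a natural number. Then there is no entire function f : ℂ → ℂ such that u(z) · f(a·z) − a^n · u(0) · f(z) = z^n for every z ∈ ℂ. -/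
/-- for `0 < |a| < 1` and `u` entire with `u(0) ≠ 0`, the monomial `z^n`
(`n ≥ 1`) is not in the range of `W_{(u,ψ)} − a^n·u(0)·I` where `ψ(z) = a·z`. -/
theorem monomial_not_in_range (a : ℂ) (ha0 : 0 < ‖a‖)
    (ha1 : ‖a‖ < 1) (u : ℂ → ℂ) (hu : Differentiable ℂ u) (hu0 : u 0 ≠ 0)
    (n : ℕ) (hn : 1 ≤ n) :
    ¬ ∃ f : ℂ → ℂ, Differentiable ℂ f ∧
        ∀ z : ℂ, u z * f (a * z) - a ^ n * u 0 * f z = z ^ n := by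
  rintro ⟨f, hf, heq⟩
  have ha : a ≠ 0 := by
    intro h; rw [h] at ha0; simp at ha0
  have hfa : AnalyticAt ℂ f 0 := hf.analyticAt 0
  have htend : Filter.Tendsto (fun z : ℂ => a * z) (nhds 0) (nhds 0) := by
    have : Continuous (fun z : ℂ => a * z) := continuous_const.mul continuous_id
    simpa using this.tendsto 0
  by_cases htop : analyticOrderAt f 0 = ⊤
  · -- f vanishes near 0
    have hev : ∀ᶠ z in nhds (0:ℂ), f z = 0 := analyticOrderAt_eq_top.mp htop
    have hev2 : ∀ᶠ z in nhds (0:ℂ), f (a * z) = 0 := htend.eventually hev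
    have hzn : ∀ᶠ z in nhds (0:ℂ), (z:ℂ) ^ n = 0 := by
      filter_upwards [hev, hev2] with z h1 h2
      rw [← heq z, h1, h2]; ring
    have hzn' : ∀ᶠ z in nhdsWithin (0:ℂ) {(0:ℂ)}ᶜ, (z:ℂ) ^ n = 0 :=
      hzn.filter_mono nhdsWithin_le_nhds
    obtain ⟨z, hz⟩ := (hzn'.and self_mem_nhdsWithin).exists
    exact hz.2 ((pow_eq_zero_iff (by omega : n ≠ 0)).mp hz.1)
  · obtain ⟨m, hm⟩ := ENat.ne_top_iff_exists.mp htop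
    obtain ⟨g, hg, hg0, hev⟩ := hfa.analyticOrderAt_eq_natCast.mp hm.symm
    have hev2 : ∀ᶠ z in nhds (0:ℂ), f (a * z) = (a * z) ^ m • g (a * z) := by
      have := htend.eventually hev
      simpa using this
    set φ : ℂ → ℂ := fun z => a ^ m * u z * g (a * z) - a ^ n * u 0 * g z with hφ
    have hφc : ContinuousAt φ 0 := by
      have hgc : ContinuousAt g 0 := hg.continuousAt
      have hgac : ContinuousAt (fun z => g (a * z)) 0 := by
        apply ContinuousAt.comp (x := (0:ℂ))
        · simpa using hgc
        · exact (continuous_const.mul continuous_id).continuousAt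
      exact ((continuousAt_const.mul (hu.continuous.continuousAt)).mul hgac).sub
        (continuousAt_const.mul hgc)
    have key : ∀ᶠ z in nhds (0:ℂ), z ^ m * φ z = z ^ n := by
      filter_upwards [hev, hev2] with z h1 h2
      rw [← heq z, h1, h2]; simp [hφ, smul_eq_mul]; ring
    have key' : ∀ᶠ z in nhdsWithin (0:ℂ) {(0:ℂ)}ᶜ, z ^ m * φ z = z ^ n :=
      key.filter_mono nhdsWithin_le_nhds
    have hφt : Filter.Tendsto φ (nhdsWithin (0:ℂ) {(0:ℂ)}ᶜ) (nhds (φ 0)) :=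
      (hφc.tendsto).mono_left nhdsWithin_le_nhds
    have hφ0 : φ 0 = (a ^ m - a ^ n) * (u 0 * g 0) := by simp [hφ]; ring
    rcases le_or_gt m n with hmn | hmn
    · -- φ z = z^(n-m) on punctured nbhd
      have heq2 : ∀ᶠ z in nhdsWithin (0:ℂ) {(0:ℂ)}ᶜ, φ z = z ^ (n - m) := by
        filter_upwards [key', self_mem_nhdsWithin] with z h1 (h2 : z ≠ 0)
        have : z ^ m * φ z = z ^ m * z ^ (n - m) := by
          rw [h1, ← pow_add]; congr 1; omega
        exact mul_left_cancel₀ (pow_ne_zero m h2) this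
      have ht2 : Filter.Tendsto (fun z : ℂ => z ^ (n - m)) (nhdsWithin (0:ℂ) {(0:ℂ)}ᶜ)
          (nhds ((0:ℂ) ^ (n - m))) :=
        ((continuous_pow (n-m)).tendsto 0).mono_left nhdsWithin_le_nhds
      have huniq : φ 0 = (0:ℂ) ^ (n - m) :=
        tendsto_nhds_unique (hφt.congr' heq2) ht2
      rcases eq_or_lt_of_le hmn with hmn' | hmn'
      · -- m = n : φ 0 = 1 but φ 0 = 0
        rw [hφ0, hmn'] at huniq
        simp [hmn'] at huniq
      · -- m < n : φ 0 = 0 ⇒ a^m = a^n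
        rw [hφ0] at huniq
        have : (0:ℂ) ^ (n - m) = 0 := zero_pow (by omega)
        rw [this, mul_eq_zero] at huniq
        rcases huniq with h | h
        · have ham : a ^ m = a ^ n := by linear_combination h
          have := congrArg norm ham
          rw [norm_pow, norm_pow] at this
          have hlt : ‖a‖ ^ n < ‖a‖ ^ m :=
            pow_lt_pow_right_of_lt_one₀ ha0 ha1 hmn'
          rw [this] at hlt
          exact lt_irrefl _ hlt
        · rcases mul_eq_zero.mp h with h | h
          · exact hu0 h
          · exact hg0 h
    · -- m > n : z^(m-n) * φ z = 1 on punctured nbhd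
      have heq2 : ∀ᶠ z in nhdsWithin (0:ℂ) {(0:ℂ)}ᶜ, z ^ (m - n) * φ z = 1 := by
        filter_upwards [key', self_mem_nhdsWithin] with z h1 (h2 : z ≠ 0)
        have : z ^ n * (z ^ (m - n) * φ z) = z ^ n * 1 := by
          rw [mul_one, ← mul_assoc, ← pow_add, ← h1]; congr 2; omega
        exact mul_left_cancel₀ (pow_ne_zero n h2) this
      have ht2 : Filter.Tendsto (fun z : ℂ => z ^ (m - n) * φ z) (nhdsWithin (0:ℂ) {(0:ℂ)}ᶜ)
          (nhds ((0:ℂ) ^ (m - n) * φ 0)) :=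
        (((continuous_pow (m-n)).tendsto 0).mono_left nhdsWithin_le_nhds).mul hφt
      have huniq : (0:ℂ) ^ (m - n) * φ 0 = 1 :=
        tendsto_nhds_unique (ht2.congr' heq2) tendsto_const_nhds
      rw [zero_pow (by omega), zero_mul] at huniq
      exact zero_ne_one huniq
end

section
/- Let 1 ≤ p < ∞ and let a, b, c ∈ ℂ with |a| = 1 and |c| = e^{−|b|²/2}. Set ψ(z) = a·z + b and u(z) = c · exp(−a·conj(b)·z). Then for every entire function f : ℂ → ℂ, ∫_ℂ |u(z) · f(ψ(z))|^p · exp(−p|z|²/2) dA(z) = ∫_ℂ |f(z)|^p · exp(−p|z|²/2) dA(z); that is, W_{(u,ψ)} f = u·(f∘ψ) is an isometry for the Fock space norm. -/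
open MeasureTheory

/-- for `|a| = 1`, `|c| = e^{−|b|²/2}`, `ψ(z) = az + b` and
`u(z) = c·exp(−a·conj(b)·z)`, the operator `W_{(u,ψ)} f = u·(f ∘ ψ)` is an isometry
for the Fock space norm. -/
theorem weighted_composition_isometry (p : ℝ) (hp : 1 ≤ p) (a b c : ℂ)
    (ha : ‖a‖ = 1) (hc : ‖c‖ = Real.exp (-(‖b‖ ^ 2) / 2))
    (ψ u : ℂ → ℂ) (hψ : ∀ z : ℂ, ψ z = a * z + b)
    (hu : ∀ z : ℂ, u z = c * Complex.exp (-(a * (starRingEnd ℂ) b * z)))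
    (f : ℂ → ℂ) (hf : Differentiable ℂ f) :
    ∫ z : ℂ, ‖u z * f (ψ z)‖ ^ p * Real.exp (-(p * ‖z‖ ^ 2) / 2)
      = ∫ z : ℂ, ‖f z‖ ^ p * Real.exp (-(p * ‖z‖ ^ 2) / 2) := by
  set g : ℂ → ℝ := fun z => ‖f z‖ ^ p * Real.exp (-(p * ‖z‖ ^ 2) / 2)
    with hg
  have hp0 : 0 < p := lt_of_lt_of_le one_pos hp
  -- pointwise identity
  have key : ∀ z : ℂ,
      ‖u z * f (ψ z)‖ ^ p * Real.exp (-(p * ‖z‖ ^ 2) / 2) = g (ψ z) := by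
    intro z
    have habs : ‖u z‖ =
        Real.exp (-(‖b‖ ^ 2) / 2 - (a * (starRingEnd ℂ) b * z).re) := by
      rw [hu z, norm_mul, hc, Complex.norm_exp, ← Real.exp_add, Complex.neg_re]
      ring_nf
    have hnormSq : ‖ψ z‖ ^ 2 =
        ‖z‖ ^ 2 + ‖b‖ ^ 2 + 2 * (a * (starRingEnd ℂ) b * z).re := by
      rw [hψ z, ← Complex.normSq_eq_norm_sq, ← Complex.normSq_eq_norm_sq, ← Complex.normSq_eq_norm_sq,
        Complex.normSq_add, Complex.normSq_mul]
      have ha2 : Complex.normSq a = 1 := by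
        rw [Complex.normSq_eq_norm_sq, ha]; norm_num
      rw [ha2, one_mul]
      ring_nf
    rw [norm_mul, Real.mul_rpow (norm_nonneg _) (norm_nonneg _), habs,
      ← Real.exp_mul, hg]
    show _ = ‖f (ψ z)‖ ^ p * Real.exp (-(p * ‖ψ z‖ ^ 2) / 2)
    rw [mul_assoc, mul_comm, mul_assoc, ← Real.exp_add]
    congr 2
    rw [hnormSq]
    ring
  simp_rw [key]
  -- change of variables
  have ha' : a ∈ Submonoid.unitSphere ℂ := mem_sphere_zero_iff_norm.mpr ha
  set a' : Circle := ⟨a, ha'⟩ with ha''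
  have hrot := (rotation a').measurePreserving
  have h1 : ∫ z : ℂ, g (ψ z) = ∫ z : ℂ, g (z + b) := by
    have := hrot.integral_comp (rotation a').toHomeomorph.measurableEmbedding
      (fun z => g (z + b))
    simp only [LinearIsometryEquiv.coe_toHomeomorph, rotation_apply] at this
    rw [← this]
    congr 1; ext z; rw [hψ z]
  rw [h1, integral_add_right_eq_self g b]
end

section
/- Let 1 ≤ p < ∞ and let a ∈ ℂ with |a| = 1 and a^m ≠ 1 for every natural number m ≥ 1 (a is not a root of unity). Then for every entire f : ℂ → ℂ with ‖f‖_p < ∞, lim_{n→∞} ‖(1/n) · Σ_{k=1}^{n} f(a^k · ·) − f(0)‖_p = 0, where f(a^k··) denotes the function z ↦ f(a^k·z) and f(0) denotes the constant function with value f(0). -/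
open MeasureTheory

open Filter Metric Complex
open scoped Topology Nat NNReal ENNReal

private lemma norm_avg_le {w : ℕ → ℂ} {M : ℝ} (hM : 0 ≤ M) (n : ℕ)
    (h : ∀ k ∈ Finset.Icc 1 n, ‖w k‖ ≤ M) :
    ‖(1 / (n : ℂ)) * ∑ k ∈ Finset.Icc 1 n, w k‖ ≤ M := by
  cases n with
  | zero => simpa using hM
  | succ m =>
    rw [norm_mul]
    have h1 : ‖(1 : ℂ) / ((m + 1 : ℕ) : ℂ)‖ = 1 / ((m : ℝ) + 1) := by
      rw [norm_div, norm_one, Complex.norm_natCast]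
      push_cast
      ring
    have h2 : ‖∑ k ∈ Finset.Icc 1 (m + 1), w k‖ ≤ ((m : ℝ) + 1) * M := by
      refine le_trans (norm_sum_le _ _) ?_
      calc ∑ k ∈ Finset.Icc 1 (m + 1), ‖w k‖ ≤ ∑ _k ∈ Finset.Icc 1 (m + 1), M :=
            Finset.sum_le_sum h
        _ = ((m : ℝ) + 1) * M := by
            rw [Finset.sum_const, Nat.card_Icc]
            simp [nsmul_eq_mul]
    calc ‖(1 : ℂ) / ((m + 1 : ℕ) : ℂ)‖ * ‖∑ k ∈ Finset.Icc 1 (m + 1), w k‖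
        ≤ (1 / ((m : ℝ) + 1)) * (((m : ℝ) + 1) * M) := by
          rw [h1]
          exact mul_le_mul_of_nonneg_left h2 (by positivity)
      _ = M := by field_simp

private lemma cesaro_zero {x : ℂ} (hx : ‖x‖ = 1) (hx1 : x ≠ 1) :
    Tendsto (fun n : ℕ => (1 / (n : ℂ)) * ∑ k ∈ Finset.Icc 1 n, x ^ k) atTop (𝓝 0) := by
  have key : ∀ n : ℕ, ‖(1 / (n : ℂ)) * ∑ k ∈ Finset.Icc 1 n, x ^ k‖ ≤ (2 / ‖x - 1‖) / n := by
    intro n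
    have hgeom : ∑ k ∈ Finset.Icc 1 n, x ^ k = x * ((x ^ n - 1) / (x - 1)) := by
      rw [← Finset.Ico_add_one_right_eq_Icc, Finset.sum_Ico_eq_sum_range]
      have hpt : ∀ i ∈ Finset.range n, x ^ (1 + i) = x * x ^ i := fun i _ => by
        rw [pow_add, pow_one]
      rw [Nat.add_sub_cancel, Finset.sum_congr rfl hpt, ← Finset.mul_sum, geom_sum_eq hx1]
    have hS : ‖∑ k ∈ Finset.Icc 1 n, x ^ k‖ ≤ 2 / ‖x - 1‖ := by
      rw [hgeom, norm_mul, hx, one_mul, norm_div]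
      gcongr
      calc ‖x ^ n - 1‖ ≤ ‖x ^ n‖ + ‖(1 : ℂ)‖ := norm_sub_le _ _
        _ = 2 := by rw [norm_pow, hx, one_pow, norm_one]; norm_num
    rw [norm_mul, norm_div, norm_one, Complex.norm_natCast]
    calc 1 / (n : ℝ) * ‖∑ k ∈ Finset.Icc 1 n, x ^ k‖ ≤ 1 / (n : ℝ) * (2 / ‖x - 1‖) := by
          gcongr
      _ = (2 / ‖x - 1‖) / n := by ring
  exact squeeze_zero_norm key (tendsto_const_div_atTop_nhds_zero_nat _)

private lemma avg_tendsto {a : ℂ} (ha : ‖a‖ = 1) (hroot : ∀ m : ℕ, 1 ≤ m → a ^ m ≠ 1)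
    {f : ℂ → ℂ} (hf : Differentiable ℂ f) (z : ℂ) :
    Tendsto (fun n : ℕ => (1 / (n : ℂ)) * ∑ k ∈ Finset.Icc 1 n, f (a ^ k * z))
      atTop (𝓝 (f 0)) := by
  have hak : ∀ k : ℕ, ‖a ^ k‖ = 1 := fun k => by rw [norm_pow, ha, one_pow]
  set c : ℕ → ℂ := fun j => (j ! : ℂ)⁻¹ * iteratedDeriv j f 0 with hc
  have hsum : ∀ w : ℂ, HasSum (fun j => w ^ j * c j) (f w) := by
    intro w
    have h := Complex.hasSum_taylorSeries_of_entire hf 0 w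
    have h2 : (fun j : ℕ => w ^ j * c j)
        = fun j : ℕ => (j ! : ℂ)⁻¹ • (w - 0) ^ j • iteratedDeriv j f 0 := by
      funext j
      simp only [hc, smul_eq_mul, sub_zero]
      ring
    rw [h2]
    exact h
  have hc0 : c 0 = f 0 := by simp [hc, iteratedDeriv_zero]
  -- the majorant
  set r : ℝ := 2 * (‖z‖ + 1) with hr
  have hrpos : (0 : ℝ) < r := by positivity
  have hsummable := (hsum (r : ℂ)).summable
  have hb0 : Tendsto (fun j => ‖(r : ℂ) ^ j * c j‖) atTop (𝓝 0) := by
    have := hsummable.tendsto_atTop_zero.norm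
    simpa using this
  obtain ⟨C, hC⟩ : ∃ C : ℝ, ∀ j, ‖(r : ℂ) ^ j * c j‖ ≤ C := by
    obtain ⟨C, hC⟩ := hb0.bddAbove_range
    exact ⟨C, fun j => hC (Set.mem_range_self j)⟩
  have hterm_bound : ∀ j : ℕ, ‖z‖ ^ j * ‖c j‖ ≤ C * (1 / 2) ^ j := by
    intro j
    have h1 : ‖z‖ ≤ r * (1 / 2) := by rw [hr]; linarith
    have h2 : ‖z‖ ^ j * ‖c j‖ ≤ (r * (1 / 2)) ^ j * ‖c j‖ := by
      gcongr
    have h3 : (r * (1 / 2)) ^ j * ‖c j‖ = (r ^ j * ‖c j‖) * (1 / 2) ^ j := by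
      rw [mul_pow]; ring
    have h4 : r ^ j * ‖c j‖ ≤ C := by
      have : ‖(r : ℂ) ^ j * c j‖ = r ^ j * ‖c j‖ := by
        rw [norm_mul, norm_pow, Complex.norm_real, Real.norm_eq_abs, abs_of_pos hrpos]
      rw [← this]; exact hC j
    calc ‖z‖ ^ j * ‖c j‖ ≤ (r ^ j * ‖c j‖) * (1 / 2) ^ j := by rw [← h3]; exact h2
      _ ≤ C * (1 / 2) ^ j := by gcongr
  -- the terms
  set F : ℕ → ℕ → ℂ := fun n j => (1 / (n : ℂ)) * ∑ k ∈ Finset.Icc 1 n, ((a ^ k * z) ^ j * c j)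
    with hF
  have hFsum : ∀ n : ℕ, HasSum (F n)
      ((1 / (n : ℂ)) * ∑ k ∈ Finset.Icc 1 n, f (a ^ k * z)) :=
    fun n => (hasSum_sum fun k _ => hsum (a ^ k * z)).mul_left _
  have hFbound : ∀ n j, ‖F n j‖ ≤ C * (1 / 2) ^ j := by
    intro n j
    refine le_trans (norm_avg_le ?_ n fun k _ => ?_) (hterm_bound j)
    · positivity
    · rw [norm_mul, norm_pow, norm_mul, hak k, one_mul]
  set L : ℕ → ℂ := fun j => if j = 0 then f 0 else 0 with hL
  have hFlim : ∀ j : ℕ, Tendsto (fun n => F n j) atTop (𝓝 (L j)) := by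
    intro j
    rcases Nat.eq_zero_or_pos j with hj | hj
    · subst hj
      have : ∀ᶠ n : ℕ in atTop, F n 0 = f 0 := by
        filter_upwards [eventually_ge_atTop 1] with n hn
        have hn0 : ((n : ℂ)) ≠ 0 := by
          simpa using Nat.one_le_iff_ne_zero.mp hn
        simp only [hF, pow_zero, one_mul, Finset.sum_const, Nat.card_Icc, Nat.add_sub_cancel,
          nsmul_eq_mul]
        rw [← hc0]
        field_simp
      simpa [hL] using Tendsto.congr' (this.mono fun n h => h.symm) tendsto_const_nhds
    · have hrw : ∀ n : ℕ, F n j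
          = ((1 / (n : ℂ)) * ∑ k ∈ Finset.Icc 1 n, (a ^ j) ^ k) * (z ^ j * c j) := by
        intro n
        simp only [hF]
        rw [mul_assoc, Finset.sum_mul]
        congr 1
        refine Finset.sum_congr rfl fun k _ => ?_
        rw [mul_pow, pow_right_comm]
        ring
      have haj : a ^ j ≠ 1 := hroot j hj
      have h0 := (cesaro_zero (hak j) haj).mul_const (z ^ j * c j)
      rw [zero_mul] at h0
      have : L j = 0 := by simp [hL, Nat.pos_iff_ne_zero.mp hj]
      rw [this]
      exact Tendsto.congr (fun n => (hrw n).symm) h0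
  have htsum := tendsto_tsum_of_dominated_convergence
    (f := F) (g := L) (bound := fun j => C * (1 / 2) ^ j)
    ((summable_geometric_two).mul_left C) hFlim (Eventually.of_forall fun n => hFbound n)
  have hLsum : ∑' j, L j = f 0 := by
    simp only [hL]
    exact tsum_ite_eq 0 (fun _ => f 0)
  rw [hLsum] at htsum
  exact Tendsto.congr (fun n => (hFsum n).tsum_eq) htsum

private lemma measurePreserving_mul_unit {b : ℂ} (hb : ‖b‖ = 1) :
    MeasurePreserving (fun z : ℂ => b * z) volume volume := by
  have hmem : b ∈ Metric.sphere (0 : ℂ) 1 := by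
    simpa [mem_sphere_iff_norm] using hb
  have h := (rotation ⟨b, hmem⟩).measurePreserving
  have heq : ⇑(rotation ⟨b, hmem⟩) = fun z : ℂ => b * z := by
    funext z
    exact rotation_apply _ z
  rwa [heq] at h

private lemma tendsto_tail_lintegral {ψ : ℂ → ℝ≥0∞} (hψ : Measurable ψ)
    (hfin : ∫⁻ z, ψ z ≠ ⊤) :
    Tendsto (fun R : ℕ => ∫⁻ z in (Metric.closedBall (0 : ℂ) R)ᶜ, ψ z) atTop (𝓝 0) := by
  have h0 : (fun R : ℕ => ∫⁻ z in (Metric.closedBall (0 : ℂ) R)ᶜ, ψ z)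
      = fun R : ℕ => ∫⁻ z, ((Metric.closedBall (0 : ℂ) R)ᶜ).indicator ψ z := by
    funext R
    rw [lintegral_indicator measurableSet_closedBall.compl]
  rw [h0]
  have hres := tendsto_lintegral_of_dominated_convergence (μ := volume)
    (F := fun R : ℕ => ((Metric.closedBall (0 : ℂ) R)ᶜ).indicator ψ) (f := fun _ => 0)
    (bound := ψ)
    (fun R => hψ.indicator measurableSet_closedBall.compl)
    (fun R => Eventually.of_forall fun z => Set.indicator_le_self _ _ z)
    hfin
    (Eventually.of_forall fun z => by
      refine tendsto_atTop_of_eventually_const (i₀ := ⌈‖z‖⌉₊) fun R hR => ?_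
      have hz : z ∈ Metric.closedBall (0 : ℂ) R := by
        rw [mem_closedBall_zero_iff]
        exact le_trans (Nat.le_ceil _) (by exact_mod_cast hR)
      simp [Set.indicator_of_notMem, hz])
  simpa using hres

private lemma enn_norm_rpow {p : ℝ} (hp : 0 ≤ p) (x : ℂ) :
    (‖x‖₊ : ℝ≥0∞) ^ p = ENNReal.ofReal (‖x‖ ^ p) := by
  exact (congrArg (· ^ p) (ofReal_norm x)).symm.trans (ENNReal.ofReal_rpow_of_nonneg (norm_nonneg x) hp)

private lemma integrand_eq {p : ℝ} (hp : 0 < p) (g : ℂ → ℂ) (z : ℂ) :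
    ‖g z‖ ^ p * Real.exp (-(p * ‖z‖ ^ 2) / 2)
      = ‖g z * ((Real.exp (-‖z‖ ^ 2 / 2) : ℝ) : ℂ)‖ ^ p := by
  rw [norm_mul, Complex.norm_real, Real.norm_eq_abs, abs_of_pos (Real.exp_pos _),
    Real.mul_rpow (by positivity) (Real.exp_pos _).le, ← Real.exp_mul]
  congr 2
  ring

set_option maxHeartbeats 1000000 in
/-- Theorem 4.5(ii): if `|a| = 1` and `a` is not a root of unity, the
composition operator `f ↦ f(a·)` is mean ergodic on `F_p` with limit projection
`f ↦ f(0)·1`. -/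
theorem mean_ergodic_composition_rotation (p : ℝ) (hp : 1 ≤ p) (a : ℂ)
    (ha : ‖a‖ = 1) (hroot : ∀ m : ℕ, 1 ≤ m → a ^ m ≠ 1)
    (f : ℂ → ℂ) (hf : Differentiable ℂ f)
    (hfp : Integrable (fun z : ℂ => ‖f z‖ ^ p *
      Real.exp (-(p * ‖z‖ ^ 2) / 2))) :
    Filter.Tendsto (fun n : ℕ =>
        fockNorm p (fun z =>
          (1 / (n : ℂ)) * ∑ k ∈ Finset.Icc 1 n, f (a ^ k * z) - f 0))
      Filter.atTop (nhds 0) := by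
  have hp0 : (0 : ℝ) < p := lt_of_lt_of_le one_pos hp
  have hna : ‖a‖ = 1 := by rw [ha]
  have hak : ∀ k : ℕ, ‖a ^ k‖ = 1 := fun k => by rw [norm_pow, hna, one_pow]
  set q : ℝ≥0∞ := ENNReal.ofReal p with hq
  have hq0 : q ≠ 0 := by
    simp only [hq, ne_eq, ENNReal.ofReal_eq_zero, not_le]; exact hp0
  have hqt : q ≠ ⊤ := ENNReal.ofReal_ne_top
  have hqr : q.toReal = p := ENNReal.toReal_ofReal hp0.le
  have hq1 : 1 ≤ q := by rw [hq]; exact ENNReal.one_le_ofReal.mpr hp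
  set w : ℂ → ℝ := fun z => Real.exp (-‖z‖ ^ 2 / 2) with hw
  have hwc : Continuous w := Real.continuous_exp.comp ((continuous_norm.pow 2).neg.div_const 2)
  have hw1 : ∀ z, |w z| ≤ 1 := fun z => by
    rw [hw, abs_of_pos (Real.exp_pos _), ← Real.exp_zero]
    apply Real.exp_le_exp.mpr
    have : (0 : ℝ) ≤ ‖z‖ ^ 2 := sq_nonneg _
    linarith
  have hwrot : ∀ (k : ℕ) (z : ℂ), w (a ^ k * z) = w z := fun k z => by
    simp only [hw, norm_mul, hak k, one_mul]
  set H : ℂ → ℂ := fun z => f z * (w z : ℂ) with hH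
  set H0 : ℂ → ℂ := fun z => f 0 * (w z : ℂ) with hH0
  set K : ℕ → ℂ → ℂ := fun n z =>
    ((1 / (n : ℂ)) * ∑ k ∈ Finset.Icc 1 n, f (a ^ k * z) - f 0) * (w z : ℂ) with hK
  have hfc : Continuous f := hf.continuous
  have hKc : ∀ n, Continuous (K n) := by
    intro n
    apply Continuous.mul _ (Complex.continuous_ofReal.comp hwc)
    exact (continuous_const.mul (continuous_finset_sum _ fun k _ =>
      hfc.comp (continuous_const.mul continuous_id))).sub continuous_const
  have hHc : Continuous H := hfc.mul (Complex.continuous_ofReal.comp hwc)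
  have hH0c : Continuous H0 := continuous_const.mul (Complex.continuous_ofReal.comp hwc)
  have hmK : ∀ n, Measurable fun z => (‖K n z‖₊ : ℝ≥0∞) ^ p := fun n =>
    (ENNReal.continuous_rpow_const.measurable).comp (hKc n).measurable.nnnorm.coe_nnreal_ennreal
  have hmH : Measurable fun z => (‖H z‖₊ : ℝ≥0∞) ^ p :=
    (ENNReal.continuous_rpow_const.measurable).comp hHc.measurable.nnnorm.coe_nnreal_ennreal
  have hmH0 : Measurable fun z => (‖H0 z‖₊ : ℝ≥0∞) ^ p :=
    (ENNReal.continuous_rpow_const.measurable).comp hH0c.measurable.nnnorm.coe_nnreal_ennreal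
  have hX_eq : ∀ (u : ℂ → ℂ) (μ' : Measure ℂ),
      eLpNorm u q μ' = (∫⁻ z, (‖u z‖₊ : ℝ≥0∞) ^ p ∂μ') ^ (1 / p) := by
    intro u μ'
    have := eLpNorm_eq_lintegral_rpow_enorm_toReal (f := u) (μ := μ') hq0 hqt
    rw [hqr] at this
    exact this
  have hpow : ∀ x : ℝ≥0∞, (x ^ (1 / p)) ^ p = x := by
    intro x
    rw [one_div, ENNReal.rpow_inv_rpow hp0.ne']
  -- finiteness of the Gaussian-weighted integrals
  have hHint : Integrable (fun z => ‖H z‖ ^ p) :=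
    hfp.congr (Filter.Eventually.of_forall fun z => integrand_eq hp0 f z)
  have hH0int : Integrable (fun z => ‖H0 z‖ ^ p) := by
    have hb : (0 : ℝ) < (((p / 2 : ℝ) : ℂ)).re := by
      rw [Complex.ofReal_re]; positivity
    have hg := (GaussianFourier.integrable_cexp_neg_mul_sq_norm_add
      (V := ℂ) (b := ((p / 2 : ℝ) : ℂ)) hb 0 0).norm
    refine ((hg.const_mul (‖f 0‖ ^ p)).congr (Filter.Eventually.of_forall fun z => ?_))
    simp only [zero_mul, add_zero]
    rw [Complex.norm_exp]
    have harg : (-((p / 2 : ℝ) : ℂ) * (‖z‖ : ℂ) ^ 2).re = -(p / 2) * ‖z‖ ^ 2 := by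
      have : (-((p / 2 : ℝ) : ℂ) * (‖z‖ : ℂ) ^ 2) = ((-(p / 2) * ‖z‖ ^ 2 : ℝ) : ℂ) := by
        push_cast; ring
      rw [this, Complex.ofReal_re]
    rw [harg]
    simp only [hH0]
    rw [norm_mul, Complex.norm_real, Real.norm_eq_abs, abs_of_pos (Real.exp_pos _),
      Real.mul_rpow (norm_nonneg _) (Real.exp_pos _).le, ← Real.exp_mul]
    congr 2
    ring
  have hfinH : ∫⁻ z, (‖H z‖₊ : ℝ≥0∞) ^ p < ⊤ := by
    have heq : ∀ z : ℂ, (‖H z‖₊ : ℝ≥0∞) ^ p = (‖(‖H z‖ ^ p)‖₊ : ℝ≥0∞) := fun z => by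
      rw [enn_norm_rpow hp0.le]; exact (Real.enorm_eq_ofReal (by positivity)).symm
    calc ∫⁻ z, (‖H z‖₊ : ℝ≥0∞) ^ p = ∫⁻ z, (‖(‖H z‖ ^ p)‖₊ : ℝ≥0∞) :=
          lintegral_congr heq
      _ < ⊤ := hHint.2
  have hfinH0 : ∫⁻ z, (‖H0 z‖₊ : ℝ≥0∞) ^ p < ⊤ := by
    have heq : ∀ z : ℂ, (‖H0 z‖₊ : ℝ≥0∞) ^ p = (‖(‖H0 z‖ ^ p)‖₊ : ℝ≥0∞) := fun z => by
      rw [enn_norm_rpow hp0.le]; exact (Real.enorm_eq_ofReal (by positivity)).symm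
    calc ∫⁻ z, (‖H0 z‖₊ : ℝ≥0∞) ^ p = ∫⁻ z, (‖(‖H0 z‖ ^ p)‖₊ : ℝ≥0∞) :=
          lintegral_congr heq
      _ < ⊤ := hH0int.2
  set Ψ : ℂ → ℝ≥0∞ := fun z => (‖H z‖₊ : ℝ≥0∞) ^ p + (‖H0 z‖₊ : ℝ≥0∞) ^ p with hΨ
  have hΨm : Measurable Ψ := hmH.add hmH0
  have hΨfin : ∫⁻ z, Ψ z ≠ ⊤ := by
    rw [hΨ]
    rw [lintegral_add_left hmH]
    exact (ENNReal.add_lt_top.mpr ⟨hfinH, hfinH0⟩).ne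
  have hTail := tendsto_tail_lintegral hΨm hΨfin
  -- convergence on balls
  have hBall : ∀ R : ℝ, Tendsto
      (fun n => ∫⁻ z in Metric.closedBall (0 : ℂ) R, (‖K n z‖₊ : ℝ≥0∞) ^ p)
      atTop (𝓝 0) := by
    intro R
    obtain ⟨M, hM⟩ :=
      (isCompact_closedBall (0 : ℂ) R).exists_bound_of_continuousOn hfc.continuousOn
    set M' : ℝ := max M 0 + ‖f 0‖ with hM'
    have hM'0 : (0 : ℝ) ≤ M' := by positivity
    set B : ℝ≥0∞ := ENNReal.ofReal (M' ^ p) with hB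
    have hbd : ∀ n : ℕ, ∀ᵐ z ∂(volume.restrict (Metric.closedBall (0 : ℂ) R)),
        (‖K n z‖₊ : ℝ≥0∞) ^ p ≤ B := by
      intro n
      filter_upwards [ae_restrict_mem measurableSet_closedBall] with z hz
      have h1 : ‖K n z‖ ≤ M' := by
        have havg : ‖(1 / (n : ℂ)) * ∑ k ∈ Finset.Icc 1 n, f (a ^ k * z)‖ ≤ max M 0 := by
          refine norm_avg_le (le_max_right _ _) n fun k _ => ?_
          refine le_trans (hM _ ?_) (le_max_left _ _)
          rw [mem_closedBall_zero_iff] at hz ⊢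
          rw [norm_mul, hak k, one_mul]
          exact hz
        calc ‖K n z‖ = ‖(1 / (n : ℂ)) * ∑ k ∈ Finset.Icc 1 n, f (a ^ k * z) - f 0‖ * |w z| := by
              rw [norm_mul, Complex.norm_real, Real.norm_eq_abs]
          _ ≤ (max M 0 + ‖f 0‖) * 1 := by
              refine mul_le_mul ?_ (hw1 z) (abs_nonneg _) (by positivity)
              exact le_trans (norm_sub_le _ _) (add_le_add havg le_rfl)
          _ = M' := by rw [mul_one]
      calc (‖K n z‖₊ : ℝ≥0∞) ^ p = ENNReal.ofReal (‖K n z‖ ^ p) := enn_norm_rpow hp0.le _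
        _ ≤ B := ENNReal.ofReal_le_ofReal (Real.rpow_le_rpow (norm_nonneg _) h1 hp0.le)
    have hfin : (∫⁻ (_ : ℂ), B ∂(volume.restrict (Metric.closedBall (0 : ℂ) R))) ≠ ⊤ := by
      rw [lintegral_const, Measure.restrict_apply_univ]
      exact (ENNReal.mul_lt_top ENNReal.ofReal_lt_top measure_closedBall_lt_top).ne
    have hlim : ∀ᵐ z ∂(volume.restrict (Metric.closedBall (0 : ℂ) R)),
        Tendsto (fun n => (‖K n z‖₊ : ℝ≥0∞) ^ p) atTop (𝓝 0) := by
      refine Filter.Eventually.of_forall fun z => ?_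
      have h0 : Tendsto (fun n => K n z) atTop (𝓝 0) := by
        have h2 := ((avg_tendsto hna hroot hf z).sub_const (f 0)).mul_const ((w z : ℝ) : ℂ)
        rw [show ((f 0 - f 0) * ((w z : ℝ) : ℂ)) = 0 by ring] at h2
        exact h2
      have h1 : Tendsto (fun n => ‖K n z‖ ^ p) atTop (𝓝 0) := by
        have h2 := (h0.norm).rpow_const (Or.inr hp0.le)
        simpa [Real.zero_rpow hp0.ne'] using h2
      refine Tendsto.congr (fun n => (enn_norm_rpow hp0.le _).symm) ?_
      simpa using ENNReal.tendsto_ofReal h1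
    have hdom := tendsto_lintegral_of_dominated_convergence
      (μ := volume.restrict (Metric.closedBall (0 : ℂ) R))
      (F := fun n z => (‖K n z‖₊ : ℝ≥0∞) ^ p) (f := fun _ => 0) (bound := fun _ => B)
      (fun n => hmK n) hbd hfin hlim
    simpa using hdom
  -- main ENNReal convergence
  have hX : Tendsto (fun n => ∫⁻ z, (‖K n z‖₊ : ℝ≥0∞) ^ p) atTop (𝓝 0) := by
    rw [ENNReal.tendsto_atTop_zero]
    intro ε hε
    have h2t : (2 : ℝ≥0∞) ^ p ≠ ⊤ :=
      (ENNReal.rpow_lt_top_of_nonneg hp0.le (by simp)).ne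
    have h2z : (2 : ℝ≥0∞) ^ p ≠ 0 :=
      (ENNReal.rpow_pos (by norm_num) (by simp)).ne'
    have hε2 : (0 : ℝ≥0∞) < ε / 2 := ENNReal.div_pos hε.ne' (by simp)
    set δ : ℝ≥0∞ := (ε / 2) / (2 : ℝ≥0∞) ^ p with hδdef
    have hδ : 0 < δ := ENNReal.div_pos hε2.ne' h2t
    obtain ⟨R, hR⟩ := (hTail.eventually_lt_const hδ).exists
    set S : Set ℂ := Metric.closedBall (0 : ℂ) (R : ℝ) with hS
    set ν : Measure ℂ := volume.restrict Sᶜ with hν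
    have hrestrict : ∀ k : ℕ,
        MeasurePreserving (fun z : ℂ => a ^ k * z) ν ν := by
      intro k
      have hpre : (fun z : ℂ => a ^ k * z) ⁻¹' Sᶜ = Sᶜ := by
        ext z
        simp [hS, mem_closedBall_zero_iff, norm_mul, hak k]
      have h3 := (measurePreserving_mul_unit (hak k)).restrict_preimage
        (s := Sᶜ) measurableSet_closedBall.compl
      rw [hpre] at h3
      exact h3
    have hτH : eLpNorm H q ν ≤ δ ^ (1 / p) := by
      rw [hX_eq]
      refine ENNReal.rpow_le_rpow ?_ (by positivity)
      calc ∫⁻ z, (‖H z‖₊ : ℝ≥0∞) ^ p ∂ν ≤ ∫⁻ z, Ψ z ∂ν :=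
            lintegral_mono fun z => le_self_add
        _ ≤ δ := hR.le
    have hτH0 : eLpNorm H0 q ν ≤ δ ^ (1 / p) := by
      rw [hX_eq]
      refine ENNReal.rpow_le_rpow ?_ (by positivity)
      calc ∫⁻ z, (‖H0 z‖₊ : ℝ≥0∞) ^ p ∂ν ≤ ∫⁻ z, Ψ z ∂ν :=
            lintegral_mono fun z => le_add_self
        _ ≤ δ := hR.le
    have hKν : ∀ n : ℕ, ∫⁻ z, (‖K n z‖₊ : ℝ≥0∞) ^ p ∂ν ≤ ε / 2 := by
      intro n
      have hA : eLpNorm (fun z => ((1 / (n : ℂ)) * ∑ k ∈ Finset.Icc 1 n, f (a ^ k * z))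
          * (w z : ℂ)) q ν ≤ eLpNorm H q ν := by
        have hA2 : (fun z => ((1 / (n : ℂ)) * ∑ k ∈ Finset.Icc 1 n, f (a ^ k * z)) * (w z : ℂ))
            = (1 / (n : ℂ)) • (∑ k ∈ Finset.Icc 1 n, fun z => H (a ^ k * z)) := by
          funext z
          simp only [Pi.smul_apply, Finset.sum_apply, smul_eq_mul, hH, hwrot]
          rw [mul_assoc, Finset.sum_mul]
        rw [hA2, eLpNorm_const_smul]
        have hsum_le := eLpNorm_sum_le (μ := ν) (p := q)
          (f := fun (k : ℕ) (z : ℂ) => H (a ^ k * z)) (s := Finset.Icc 1 n)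
          (fun k _ => (hHc.comp (continuous_const.mul continuous_id)).aestronglyMeasurable) hq1
        have hterm : ∀ k ∈ Finset.Icc 1 n,
            eLpNorm (fun z => H (a ^ k * z)) q ν = eLpNorm H q ν := by
          intro k _
          have h7 : (fun z => H (a ^ k * z)) = H ∘ (fun z => a ^ k * z) := rfl
          rw [h7]
          exact eLpNorm_comp_measurePreserving hHc.aestronglyMeasurable (hrestrict k)
        rw [Finset.sum_congr rfl hterm, Finset.sum_const, Nat.card_Icc, Nat.add_sub_cancel] at hsum_le
        calc (‖(1 / (n : ℂ))‖₊ : ℝ≥0∞) * eLpNorm (∑ k ∈ Finset.Icc 1 n, fun z => H (a ^ k * z)) q ν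
            ≤ (‖(1 / (n : ℂ))‖₊ : ℝ≥0∞) * (n • eLpNorm H q ν) := by gcongr
          _ = ((‖(1 / (n : ℂ))‖₊ : ℝ≥0∞) * n) * eLpNorm H q ν := by
              rw [nsmul_eq_mul, mul_assoc]
          _ ≤ 1 * eLpNorm H q ν := by
              have h6 : (‖(1 / (n : ℂ))‖₊ : ℝ≥0∞) * (n : ℝ≥0∞) ≤ 1 := by
                cases n with
                | zero => simp
                | succ m =>
                  have h5 : (‖(1 / ((m + 1 : ℕ) : ℂ))‖₊ * ((m + 1 : ℕ) : ℝ≥0)) = 1 := by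
                    apply NNReal.coe_injective
                    simp only [NNReal.coe_mul, coe_nnnorm, NNReal.coe_natCast, NNReal.coe_one]
                    rw [norm_div, norm_one, Complex.norm_natCast]
                    have hm : ((m + 1 : ℕ) : ℝ) ≠ 0 := by positivity
                    field_simp
                  calc (‖(1 / ((m + 1 : ℕ) : ℂ))‖₊ : ℝ≥0∞) * ((m + 1 : ℕ) : ℝ≥0∞)
                      = ((‖(1 / ((m + 1 : ℕ) : ℂ))‖₊ * ((m + 1 : ℕ) : ℝ≥0) : ℝ≥0) : ℝ≥0∞) := by
                        rw [ENNReal.coe_mul, ENNReal.coe_natCast]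
                    _ ≤ 1 := by rw [h5]; simp
              exact mul_le_mul_left h6 _
          _ = eLpNorm H q ν := one_mul _
      have hmink : eLpNorm (K n) q ν ≤ eLpNorm H q ν + eLpNorm H0 q ν := by
        have hsplit : K n = (fun z => ((1 / (n : ℂ)) * ∑ k ∈ Finset.Icc 1 n, f (a ^ k * z))
            * (w z : ℂ)) - H0 := by
          funext z
          simp only [Pi.sub_apply, hK, hH0]
          ring
        rw [hsplit]
        refine le_trans (eLpNorm_sub_le ?_ ?_ hq1) (add_le_add hA le_rfl)
        · exact (((continuous_const.mul (continuous_finset_sum _ fun k _ =>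
            hfc.comp (continuous_const.mul continuous_id))).mul
            (Complex.continuous_ofReal.comp hwc))).aestronglyMeasurable
        · exact hH0c.aestronglyMeasurable
      have h6 : (eLpNorm (K n) q ν) ^ p ≤ (eLpNorm H q ν + eLpNorm H0 q ν) ^ p :=
        ENNReal.rpow_le_rpow hmink hp0.le
      rw [hX_eq, hpow] at h6
      calc ∫⁻ z, (‖K n z‖₊ : ℝ≥0∞) ^ p ∂ν
          ≤ (eLpNorm H q ν + eLpNorm H0 q ν) ^ p := h6
        _ ≤ (δ ^ (1 / p) + δ ^ (1 / p)) ^ p :=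
            ENNReal.rpow_le_rpow (add_le_add hτH hτH0) hp0.le
        _ = (2 * δ ^ (1 / p)) ^ p := by rw [two_mul]
        _ = 2 ^ p * δ := by rw [ENNReal.mul_rpow_of_nonneg _ _ hp0.le, hpow]
        _ = ε / 2 := by rw [hδdef, ENNReal.mul_div_cancel h2z h2t]
    obtain ⟨N, hN⟩ := Filter.eventually_atTop.mp ((hBall (R : ℝ)).eventually_lt_const hε2)
    refine ⟨N, fun n hn => ?_⟩
    calc ∫⁻ z, (‖K n z‖₊ : ℝ≥0∞) ^ p
        = (∫⁻ z in S, (‖K n z‖₊ : ℝ≥0∞) ^ p) + ∫⁻ z in Sᶜ, (‖K n z‖₊ : ℝ≥0∞) ^ p :=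
          (lintegral_add_compl _ measurableSet_closedBall).symm
      _ ≤ ε / 2 + ε / 2 := add_le_add (hN n hn).le (hKν n)
      _ = ε := ENNReal.add_halves ε
  -- conversion to the Fock norm
  have hconv : ∀ n : ℕ,
      fockNorm p (fun z => (1 / (n : ℂ)) * ∑ k ∈ Finset.Icc 1 n, f (a ^ k * z) - f 0)
        = ((p / (2 * Real.pi)) * (∫⁻ z, (‖K n z‖₊ : ℝ≥0∞) ^ p).toReal) ^ (1 / p) := by
    intro n
    have hgc : Continuous fun z => (1 / (n : ℂ)) * ∑ k ∈ Finset.Icc 1 n, f (a ^ k * z) - f 0 :=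
      (continuous_const.mul (continuous_finset_sum _ fun k _ =>
        hfc.comp (continuous_const.mul continuous_id))).sub continuous_const
    have hmeas : AEStronglyMeasurable (fun z : ℂ =>
        ‖(1 / (n : ℂ)) * ∑ k ∈ Finset.Icc 1 n, f (a ^ k * z) - f 0‖ ^ p *
        Real.exp (-(p * ‖z‖ ^ 2) / 2)) volume := by
      refine Continuous.aestronglyMeasurable ?_
      refine Continuous.mul ?_ ?_
      · exact (continuous_norm.comp hgc).rpow_const fun x => Or.inr hp0.le
      · exact Real.continuous_exp.comp
          (((continuous_const.mul ((continuous_norm.pow 2))).neg).div_const 2)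
    have hInt : (∫ z : ℂ, ‖(1 / (n : ℂ)) * ∑ k ∈ Finset.Icc 1 n, f (a ^ k * z) - f 0‖
          ^ p * Real.exp (-(p * ‖z‖ ^ 2) / 2))
        = (∫⁻ z, (‖K n z‖₊ : ℝ≥0∞) ^ p).toReal := by
      rw [integral_eq_lintegral_of_nonneg_ae (Filter.Eventually.of_forall fun z => by positivity)
        hmeas]
      congr 1
      refine lintegral_congr fun z => ?_
      rw [enn_norm_rpow hp0.le]
      simp only [hK, hw]
      exact congrArg ENNReal.ofReal (integrand_eq hp0
        (fun z => (1 / (n : ℂ)) * ∑ k ∈ Finset.Icc 1 n, f (a ^ k * z) - f 0) z)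
    rw [fockNorm, hInt]
  have h1 : Tendsto (fun n => (∫⁻ z, (‖K n z‖₊ : ℝ≥0∞) ^ p).toReal) atTop (𝓝 0) := by
    have h2 := (ENNReal.tendsto_toReal (by simp : (0 : ℝ≥0∞) ≠ ⊤)).comp hX
    exact h2
  have h2 := (h1.const_mul (p / (2 * Real.pi))).rpow_const (Or.inr (by positivity : (0:ℝ) ≤ 1 / p))
  rw [mul_zero, Real.zero_rpow (by positivity : (0:ℝ) < 1 / p).ne'] at h2
  exact Tendsto.congr (fun n => (hconv n).symm) h2
end
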